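/- arXiv:0901.2244 — 7 statements merged into one kernel-verified Lean document; each statement's English description precedes it below -/
import Mathlib

section
/- Let H be a complex Hilbert space, U a unitary operator on H, and e ∈ H a vector such that the linear span of {U^k e : k ∈ ℤ} is dense in H. Then U^n converges to 0 in the weak operator topology as n → ∞ (i.e., ⟨φ, U^n χ⟩ → 0 for all φ, χ ∈ H) if and only if ⟨e, U^n e⟩ → 0 as n → ∞. -/
set_option linter.unnecessarySimpa false


open Filter Topology

private lemma tendsto_of_dense_aux {H : Type*} [NormedAddCommGroup H]
    (f : ℕ → H → ℂ) (C : ℝ) (hC : 0 ≤ C)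
    (hlip : ∀ n x y, ‖f n x - f n y‖ ≤ C * ‖x - y‖)
    {s : Set H} (hs : Dense s)
    (h : ∀ y ∈ s, Tendsto (fun n => f n y) atTop (𝓝 0))
    (x : H) : Tendsto (fun n => f n x) atTop (𝓝 0) := by
  rw [NormedAddCommGroup.tendsto_nhds_zero]
  intro ε hε
  have hδ : 0 < ε / (2 * (C + 1)) := by positivity
  obtain ⟨y, hyball, hy⟩ := Metric.dense_iff.mp hs x _ hδ
  have hball : dist y x < ε / (2 * (C + 1)) := by
    simpa [Metric.mem_ball] using hyball
  have hy2 := (NormedAddCommGroup.tendsto_nhds_zero.mp (h y hy)) (ε / 2) (by positivity)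
  filter_upwards [hy2] with n hn
  have h1 : ‖f n x‖ ≤ ‖f n x - f n y‖ + ‖f n y‖ := by
    calc ‖f n x‖ = ‖(f n x - f n y) + f n y‖ := by ring_nf
      _ ≤ ‖f n x - f n y‖ + ‖f n y‖ := norm_add_le _ _
  have h2 : ‖f n x - f n y‖ ≤ C * ‖x - y‖ := hlip n x y
  have h3 : ‖x - y‖ < ε / (2 * (C + 1)) := by
    rw [← dist_eq_norm, dist_comm]; exact hball
  have h4 : C * ‖x - y‖ < ε / 2 := by
    calc C * ‖x - y‖ ≤ (C + 1) * ‖x - y‖ := by nlinarith [norm_nonneg (x - y)]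
      _ < (C + 1) * (ε / (2 * (C + 1))) := by
          exact mul_lt_mul_of_pos_left h3 (by linarith)
      _ = ε / 2 := by field_simp
  calc ‖f n x‖ ≤ ‖f n x - f n y‖ + ‖f n y‖ := h1
    _ < ε / 2 + ε / 2 := by
        have := h2.trans_lt h4
        linarith
    _ = ε := by ring

/-- For a unitary `U` on a complex Hilbert space with cyclic vector `e`
(the span of `{U^k e : k ∈ ℤ}` is dense), `U^n → 0` in the weak operator
topology iff `⟨e, U^n e⟩ → 0`. -/
theorem weak_limit_zero_iff_moment_zero
    {H : Type*} [NormedAddCommGroup H] [InnerProductSpace ℂ H] [CompleteSpace H]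
    (U : H ≃ₗᵢ[ℂ] H) (e : H)
    (hcyc : Dense ((Submodule.span ℂ (Set.range fun k : ℤ => (U ^ k) e) : Submodule ℂ H) : Set H)) :
    (∀ φ χ : H, Tendsto (fun n : ℕ => (inner ℂ φ ((U ^ n) χ) : ℂ)) atTop (𝓝 0)) ↔
      Tendsto (fun n : ℕ => (inner ℂ e ((U ^ n) e) : ℂ)) atTop (𝓝 0) := by
  constructor
  · intro h; exact h e e
  · intro hmom
    -- moment convergence along integers
    have hZ : Tendsto (fun m : ℤ => (inner ℂ e ((U ^ m) e) : ℂ)) atTop (𝓝 0) := by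
      have htoNat : Tendsto Int.toNat atTop atTop := by
        apply tendsto_atTop_atTop.mpr
        intro b
        exact ⟨(b : ℤ), fun a ha => by omega⟩
      have := hmom.comp htoNat
      apply this.congr'
      filter_upwards [eventually_ge_atTop (0 : ℤ)] with m hm
      simp only [Function.comp_apply]
      congr 1
      rw [← zpow_natCast U m.toNat, Int.toNat_of_nonneg hm]
    have hd : ∀ d : ℤ, Tendsto (fun n : ℕ => (inner ℂ e ((U ^ ((n : ℤ) + d)) e) : ℂ))
        atTop (𝓝 0) := by
      intro d
      exact hZ.comp (tendsto_atTop_add_const_right atTop d tendsto_natCast_atTop_atTop)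
    -- base case: generators against generators
    have hbase : ∀ j k : ℤ,
        Tendsto (fun n : ℕ => (inner ℂ ((U ^ j) e) ((U ^ n) ((U ^ k) e)) : ℂ)) atTop (𝓝 0) := by
      intro j k
      have key : ∀ n : ℕ, (inner ℂ ((U ^ j) e) ((U ^ n) ((U ^ k) e)) : ℂ)
          = inner ℂ e ((U ^ ((n : ℤ) + (k - j))) e) := by
        intro n
        have h1 : (U ^ n) ((U ^ k) e) = (U ^ j) ((U ^ ((n : ℤ) + (k - j))) e) := by
          have hab : ∀ (a b : ℤ) (x : H), (U ^ a) ((U ^ b) x) = (U ^ (a + b)) x := by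
            intro a b x
            rw [zpow_add, LinearIsometryEquiv.coe_mul, Function.comp_apply]
          rw [← zpow_natCast U n, hab, hab]
          congr 2
          ring
        rw [h1, LinearIsometryEquiv.inner_map_map]
      simp only [key]
      exact hd (k - j)
    set s : Set H := Set.range fun k : ℤ => (U ^ k) e with hs
    have hspan : ∀ φ ∈ Submodule.span ℂ s, ∀ χ ∈ Submodule.span ℂ s,
        Tendsto (fun n : ℕ => (inner ℂ φ ((U ^ n) χ) : ℂ)) atTop (𝓝 0) := by
      intro φ hφ χ hχ
      induction hφ using Submodule.span_induction with
      | mem x hx =>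
        induction hχ using Submodule.span_induction with
        | mem y hy =>
          obtain ⟨j, rfl⟩ := hx
          obtain ⟨k, rfl⟩ := hy
          exact hbase j k
        | zero => simpa using tendsto_const_nhds
        | add y z _ _ hy hz =>
          have : (fun n : ℕ => (inner ℂ x ((U ^ n) (y + z)) : ℂ))
              = fun n => (inner ℂ x ((U ^ n) y) : ℂ) + inner ℂ x ((U ^ n) z) := by
            funext n; rw [map_add, inner_add_right]
          rw [this]
          simpa using hy.add hz
        | smul c y _ hy =>
          have : (fun n : ℕ => (inner ℂ x ((U ^ n) (c • y)) : ℂ))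
              = fun n => c * inner ℂ x ((U ^ n) y) := by
            funext n; rw [map_smul, inner_smul_right]
          rw [this]
          simpa using hy.const_mul c
      | zero => simpa using tendsto_const_nhds
      | add y z _ _ hy hz =>
        have : (fun n : ℕ => (inner ℂ (y + z) ((U ^ n) χ) : ℂ))
            = fun n => (inner ℂ y ((U ^ n) χ) : ℂ) + inner ℂ z ((U ^ n) χ) := by
          funext n; rw [inner_add_left]
        rw [this]
        simpa using hy.add hz
      | smul c y _ hy =>
        have : (fun n : ℕ => (inner ℂ (c • y) ((U ^ n) χ) : ℂ))
            = fun n => (starRingEnd ℂ) c * inner ℂ y ((U ^ n) χ) := by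
          funext n; rw [inner_smul_left]
        rw [this]
        simpa using hy.const_mul _
    -- extend by density, first in χ then in φ
    intro φ χ
    have step1 : ∀ φ' ∈ Submodule.span ℂ s,
        Tendsto (fun n : ℕ => (inner ℂ φ' ((U ^ n) χ) : ℂ)) atTop (𝓝 0) := by
      intro φ' hφ'
      apply tendsto_of_dense_aux (fun n x => (inner ℂ φ' ((U ^ n) x) : ℂ)) ‖φ'‖ (norm_nonneg _) _ hcyc
        (fun y hy => hspan φ' hφ' y hy) χ
      intro n x y
      rw [← inner_sub_right, ← map_sub]
      calc ‖(inner ℂ φ' ((U ^ n) (x - y)) : ℂ)‖ ≤ ‖φ'‖ * ‖(U ^ n) (x - y)‖ :=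
            norm_inner_le_norm _ _
        _ = ‖φ'‖ * ‖x - y‖ := by rw [LinearIsometryEquiv.norm_map]
    apply tendsto_of_dense_aux (fun n x => (inner ℂ x ((U ^ n) χ) : ℂ)) ‖χ‖ (norm_nonneg _) _ hcyc
      (fun y hy => step1 y hy) φ
    intro n x y
    rw [← inner_sub_left]
    calc ‖(inner ℂ (x - y) ((U ^ n) χ) : ℂ)‖ ≤ ‖x - y‖ * ‖(U ^ n) χ‖ := norm_inner_le_norm _ _
      _ = ‖χ‖ * ‖x - y‖ := by rw [LinearIsometryEquiv.norm_map, mul_comm]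
end

section
/- Let H be a complex Hilbert space, U a unitary operator on H, and e ∈ H a vector such that the linear span of {U^k e : k ∈ ℤ} is dense in H. Let (θ_n) be a sequence of real numbers. Then the operators e^{−iθ_n} U^n converge in the weak operator topology to a nonzero limit if and only if both: (a) e^{−iθ_n} ⟨e, U^n e⟩ converges to a nonzero limit, and (b) the sequence e^{i(θ_{n+1} − θ_n)} converges. -/
open Filter Topology

set_option linter.unusedSectionVars false
set_option linter.unusedVariables false
set_option maxHeartbeats 1000000

section WLaux
variable {H : Type*} [NormedAddCommGroup H] [InnerProductSpace ℂ H] [CompleteSpace H]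
  (U : H ≃ₗᵢ[ℂ] H) (e : H) (θ : ℕ → ℝ)

private lemma exp_shift (w : ℂ)
    (hw : Tendsto (fun n : ℕ => Complex.exp (((θ (n+1) : ℂ) - (θ n : ℂ)) * Complex.I)) atTop (𝓝 w))
    (k : ℕ) :
    Tendsto (fun n : ℕ => Complex.exp (((θ (n+k) : ℂ) - (θ n : ℂ)) * Complex.I)) atTop (𝓝 (w^k)) := by
  induction k with
  | zero => simp only [add_zero, sub_self, zero_mul, Complex.exp_zero, pow_zero]
            exact tendsto_const_nhds
  | succ k ih =>
    have h1 := (hw.comp (tendsto_add_atTop_nat k)).mul ih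
    rw [show w * w^k = w^(k+1) by ring] at h1
    refine h1.congr fun n => ?_
    show Complex.exp _ * Complex.exp _ = _
    rw [← Complex.exp_add]; congr 1; push_cast; ring

private lemma key_lim (L w : ℂ) (hw0 : w ≠ 0)
    (hL : Tendsto (fun n : ℕ => Complex.exp (-(θ n : ℂ) * Complex.I) * (inner ℂ e ((U ^ n) e) : ℂ))
      atTop (𝓝 L))
    (hw : Tendsto (fun n : ℕ => Complex.exp (((θ (n+1) : ℂ) - (θ n : ℂ)) * Complex.I)) atTop (𝓝 w))
    (m : ℤ) :
    Tendsto (fun n : ℕ => Complex.exp (-(θ n : ℂ) * Complex.I) *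
        (inner ℂ e ((U ^ ((n:ℤ) + m)) e) : ℂ)) atTop (𝓝 (w^m * L)) := by
  rcases m with k | k
  · -- m = (k : ℤ)
    have h1 := (exp_shift θ w hw k).mul (hL.comp (tendsto_add_atTop_nat k))
    rw [show (Int.ofNat k) = (k : ℤ) from rfl, zpow_natCast]
    refine h1.congr fun n => ?_
    have e1 : ((θ (n+k) : ℂ) - (θ n : ℂ)) * Complex.I + (-(θ (n+k) : ℂ) * Complex.I)
        = -(θ n : ℂ) * Complex.I := by ring
    have e2 : (U ^ ((n:ℤ) + (k:ℤ))) e = (U ^ (n+k)) e := by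
      rw [show (n:ℤ) + (k:ℤ) = ((n+k:ℕ):ℤ) by push_cast; ring, zpow_natCast]
    simp only [Function.comp_apply]
    rw [← mul_assoc, ← Complex.exp_add, e1, e2]
  · -- m = Int.negSucc k = -(k+1)
    set j := k + 1 with hj
    have hg := exp_shift θ w hw j
    have h2 := ((hg.inv₀ (pow_ne_zero j hw0)).mul hL).comp (tendsto_sub_atTop_nat j)
    rw [show Int.negSucc k = -(j:ℤ) by simp [hj, Int.negSucc_eq], zpow_neg, zpow_natCast]
    refine h2.congr' ?_
    filter_upwards [eventually_ge_atTop j] with n hn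
    have hnj : n - j + j = n := Nat.sub_add_cancel hn
    have e1 : -((((θ n : ℝ) : ℂ) - ((θ (n-j) : ℝ) : ℂ)) * Complex.I) + (-(θ (n-j) : ℂ) * Complex.I)
        = -(θ n : ℂ) * Complex.I := by ring
    have e2 : (U ^ ((n:ℤ) + -(j:ℤ))) e = (U ^ (n - j)) e := by
      rw [show (n:ℤ) + -(j:ℤ) = ((n-j:ℕ):ℤ) by omega, zpow_natCast]
    simp only [Function.comp_apply]
    rw [hnj, ← Complex.exp_neg, ← mul_assoc, ← Complex.exp_add, e1, e2]

private lemma cauchy_approx {f : ℕ → ℂ}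
    (h : ∀ ε : ℝ, 0 < ε → ∃ g : ℕ → ℂ, CauchySeq g ∧ ∀ n, ‖f n - g n‖ ≤ ε) : CauchySeq f := by
  rw [Metric.cauchySeq_iff]
  intro ε hε
  obtain ⟨g, hg, hfg⟩ := h (ε/3) (by linarith)
  obtain ⟨N, hN⟩ := Metric.cauchySeq_iff.mp hg (ε/3) (by linarith)
  refine ⟨N, fun m hm n hn => ?_⟩
  have h1 := hN m hm n hn
  have h2 := hfg m
  have h3 := hfg n
  have key : f m - f n = (f m - g m) + (g m - g n) + (g n - f n) := by ring
  have : dist (f m) (f n) ≤ ‖f m - g m‖ + ‖g m - g n‖ + ‖g n - f n‖ := by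
    rw [dist_eq_norm, key]; exact norm_add₃_le
  rw [dist_eq_norm] at h1
  rw [norm_sub_rev] at h3
  linarith

private lemma norm_fs_le (φ χ : H) (n : ℕ) :
    ‖Complex.exp (-(θ n : ℂ) * Complex.I) * (inner ℂ φ ((U^n) χ) : ℂ)‖ ≤ ‖φ‖ * ‖χ‖ := by
  rw [norm_mul]
  have h1 : ‖Complex.exp (-(θ n : ℂ) * Complex.I)‖ = 1 := by
    simp [Complex.norm_exp]
  rw [h1, one_mul]
  calc ‖(inner ℂ φ ((U^n) χ) : ℂ)‖ ≤ ‖φ‖ * ‖(U^n) χ‖ := norm_inner_le_norm φ _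
    _ = ‖φ‖ * ‖χ‖ := by rw [(U^n).norm_map]

private lemma all_cauchy
    (hcyc : Dense ((Submodule.span ℂ (Set.range fun k : ℤ => (U ^ k) e) : Submodule ℂ H) : Set H))
    (hspan : ∀ φ ∈ Submodule.span ℂ (Set.range fun k : ℤ => (U ^ k) e),
      ∀ χ ∈ Submodule.span ℂ (Set.range fun k : ℤ => (U ^ k) e),
      ∃ l : ℂ, Tendsto (fun n : ℕ => Complex.exp (-(θ n : ℂ) * Complex.I) *
        (inner ℂ φ ((U^n) χ) : ℂ)) atTop (𝓝 l))
    (φ χ : H) :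
    CauchySeq (fun n : ℕ => Complex.exp (-(θ n : ℂ) * Complex.I) * (inner ℂ φ ((U^n) χ) : ℂ)) := by
  apply cauchy_approx
  intro ε hε
  set δ : ℝ := min 1 (ε / (2 * (‖φ‖ + ‖χ‖ + 2))) with hδdef
  have hd : 0 < 2 * (‖φ‖ + ‖χ‖ + 2) := by positivity
  have hδpos : 0 < δ := lt_min one_pos (by positivity)
  obtain ⟨φ', hφ'S, hφ'⟩ := hcyc.exists_dist_lt φ hδpos
  obtain ⟨χ', hχ'S, hχ'⟩ := hcyc.exists_dist_lt χ hδpos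
  obtain ⟨l, hl⟩ := hspan φ' hφ'S χ' hχ'S
  refine ⟨_, hl.cauchySeq, fun n => ?_⟩
  rw [dist_eq_norm] at hφ' hχ'
  have split : (inner ℂ φ ((U^n) χ) : ℂ) - (inner ℂ φ' ((U^n) χ') : ℂ)
      = (inner ℂ (φ - φ') ((U^n) χ) : ℂ) + (inner ℂ φ' ((U^n) (χ - χ')) : ℂ) := by
    rw [inner_sub_left, map_sub, inner_sub_right]; ring
  have hb : ‖(inner ℂ φ ((U^n) χ) : ℂ) - (inner ℂ φ' ((U^n) χ') : ℂ)‖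
      ≤ ‖φ - φ'‖ * ‖χ‖ + ‖φ'‖ * ‖χ - χ'‖ := by
    rw [split]
    refine (norm_add_le _ _).trans (add_le_add ?_ ?_)
    · calc ‖(inner ℂ (φ - φ') ((U^n) χ) : ℂ)‖ ≤ ‖φ - φ'‖ * ‖(U^n) χ‖ := norm_inner_le_norm _ _
        _ = ‖φ - φ'‖ * ‖χ‖ := by rw [(U^n).norm_map]
    · calc ‖(inner ℂ φ' ((U^n) (χ - χ')) : ℂ)‖ ≤ ‖φ'‖ * ‖(U^n) (χ - χ')‖ := norm_inner_le_norm _ _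
        _ = ‖φ'‖ * ‖χ - χ'‖ := by rw [(U^n).norm_map]
  have hφ'n : ‖φ'‖ ≤ ‖φ‖ + 1 := by
    have := norm_sub_norm_le φ' φ
    have h2 : ‖φ' - φ‖ < δ := by rwa [norm_sub_rev]
    have h3 : δ ≤ 1 := min_le_left _ _
    linarith
  have hδε : δ ≤ ε / (2 * (‖φ‖ + ‖χ‖ + 2)) := min_le_right _ _
  have hbound : ‖φ - φ'‖ * ‖χ‖ + ‖φ'‖ * ‖χ - χ'‖ ≤ ε := by
    have h1 : ‖φ - φ'‖ * ‖χ‖ ≤ δ * ‖χ‖ :=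
      mul_le_mul_of_nonneg_right hφ'.le (norm_nonneg _)
    have h2 : ‖φ'‖ * ‖χ - χ'‖ ≤ (‖φ‖ + 1) * δ :=
      mul_le_mul hφ'n hχ'.le (norm_nonneg _) (by positivity)
    have h3 : δ * ‖χ‖ + (‖φ‖ + 1) * δ = δ * (‖φ‖ + ‖χ‖ + 1) := by ring
    have h4 : δ * (‖φ‖ + ‖χ‖ + 1) ≤ (ε / (2 * (‖φ‖ + ‖χ‖ + 2))) * (‖φ‖ + ‖χ‖ + 2) := by
      apply mul_le_mul hδε (by linarith) (by positivity) (by positivity)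
    have h5 : (ε / (2 * (‖φ‖ + ‖χ‖ + 2))) * (‖φ‖ + ‖χ‖ + 2) = ε / 2 := by
      field_simp
    linarith
  calc ‖Complex.exp (-(θ n : ℂ) * Complex.I) * (inner ℂ φ ((U^n) χ) : ℂ)
        - Complex.exp (-(θ n : ℂ) * Complex.I) * (inner ℂ φ' ((U^n) χ') : ℂ)‖
      = ‖Complex.exp (-(θ n : ℂ) * Complex.I)‖ *
        ‖(inner ℂ φ ((U^n) χ) : ℂ) - (inner ℂ φ' ((U^n) χ') : ℂ)‖ := by
        rw [← norm_mul, mul_sub]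
    _ ≤ ε := by
        have h1 : ‖Complex.exp (-(θ n : ℂ) * Complex.I)‖ = 1 := by
          simp [Complex.norm_exp]
        rw [h1, one_mul]
        exact hb.trans hbound

private lemma fs_gen (a b : ℤ) (n : ℕ) :
    (inner ℂ ((U^a) e) ((U^n) ((U^b) e)) : ℂ) = inner ℂ e ((U^((n:ℤ) + (b - a))) e) := by
  have h1 : (U^((n:ℤ)+b)) e = (U^(n:ℤ)) ((U^b) e) := by rw [zpow_add]; rfl
  have h2 : (U^(a + ((n:ℤ)+(b-a)))) e = (U^a) ((U^((n:ℤ)+(b-a))) e) := by rw [zpow_add]; rfl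
  have h3 : (U^n) ((U^b) e) = (U^a) ((U^((n:ℤ)+(b-a))) e) := by
    rw [← zpow_natCast U n, ← h1, show (n:ℤ)+b = a + ((n:ℤ)+(b-a)) by ring, h2]
  rw [h3, LinearIsometryEquiv.inner_map_map]

private lemma span_conv (L w : ℂ) (hw0 : w ≠ 0)
    (hkey : ∀ m : ℤ, Tendsto (fun n : ℕ => Complex.exp (-(θ n : ℂ) * Complex.I) *
        (inner ℂ e ((U ^ ((n:ℤ) + m)) e) : ℂ)) atTop (𝓝 (w^m * L))) :
    ∀ φ ∈ Submodule.span ℂ (Set.range fun k : ℤ => (U ^ k) e),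
      ∀ χ ∈ Submodule.span ℂ (Set.range fun k : ℤ => (U ^ k) e),
      ∃ l : ℂ, Tendsto (fun n : ℕ => Complex.exp (-(θ n : ℂ) * Complex.I) *
        (inner ℂ φ ((U^n) χ) : ℂ)) atTop (𝓝 l) := by
  intro φ hφ
  induction hφ using Submodule.span_induction with
  | mem x hx =>
    obtain ⟨a, rfl⟩ := hx
    intro χ hχ
    induction hχ using Submodule.span_induction with
    | mem y hy =>
      obtain ⟨b, rfl⟩ := hy
      refine ⟨w^(b-a) * L, (hkey (b-a)).congr fun n => ?_⟩
      rw [fs_gen U e a b n]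
    | zero => exact ⟨0, by simpa using tendsto_const_nhds⟩
    | add y z hy hz ihy ihz =>
      obtain ⟨l1, h1⟩ := ihy
      obtain ⟨l2, h2⟩ := ihz
      refine ⟨l1 + l2, (h1.add h2).congr fun n => ?_⟩
      rw [map_add, inner_add_right]; ring
    | smul c y hy ihy =>
      obtain ⟨l, h⟩ := ihy
      refine ⟨c * l, (tendsto_const_nhds.mul h).congr fun n => ?_⟩
      rw [map_smul, inner_smul_right]; ring
  | zero =>
    intro χ hχ
    exact ⟨0, by simpa using tendsto_const_nhds⟩
  | add x y hx hy ihx ihy =>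
    intro χ hχ
    obtain ⟨l1, h1⟩ := ihx χ hχ
    obtain ⟨l2, h2⟩ := ihy χ hχ
    refine ⟨l1 + l2, (h1.add h2).congr fun n => ?_⟩
    rw [inner_add_left]; ring
  | smul c x hx ihx =>
    intro χ hχ
    obtain ⟨l, h⟩ := ihx χ hχ
    refine ⟨(starRingEnd ℂ) c * l, (tendsto_const_nhds.mul h).congr fun n => ?_⟩
    rw [inner_smul_left]; ring

private lemma build_A (L : ℂ) (hL0 : L ≠ 0)
    (hL : Tendsto (fun n : ℕ => Complex.exp (-(θ n : ℂ) * Complex.I) *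
      (inner ℂ e ((U ^ n) e) : ℂ)) atTop (𝓝 L))
    (hcau : ∀ φ χ : H, CauchySeq (fun n : ℕ => Complex.exp (-(θ n : ℂ) * Complex.I) *
      (inner ℂ φ ((U^n) χ) : ℂ))) :
    ∃ A : H →L[ℂ] H, A ≠ 0 ∧ ∀ φ χ : H,
      Tendsto (fun n : ℕ => Complex.exp (-(θ n : ℂ) * Complex.I) * (inner ℂ φ ((U^n) χ) : ℂ))
        atTop (𝓝 (inner ℂ φ (A χ))) := by
  set F : H → H → ℂ := fun φ χ =>
    limUnder atTop (fun n : ℕ => Complex.exp (-(θ n : ℂ) * Complex.I) *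
      (inner ℂ φ ((U^n) χ) : ℂ)) with hFdef
  have hF : ∀ φ χ : H, Tendsto (fun n : ℕ => Complex.exp (-(θ n : ℂ) * Complex.I) *
      (inner ℂ φ ((U^n) χ) : ℂ)) atTop (𝓝 (F φ χ)) := fun φ χ => (hcau φ χ).tendsto_limUnder
  have hFadd_l : ∀ φ φ' χ : H, F (φ + φ') χ = F φ χ + F φ' χ := by
    intro φ φ' χ
    refine tendsto_nhds_unique (hF (φ + φ') χ) (((hF φ χ).add (hF φ' χ)).congr fun n => ?_)
    rw [inner_add_left]; ring
  have hFsmul_l : ∀ (c : ℂ) (φ χ : H), F (c • φ) χ = (starRingEnd ℂ) c * F φ χ := by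
    intro c φ χ
    refine tendsto_nhds_unique (hF (c • φ) χ) ((tendsto_const_nhds.mul (hF φ χ)).congr fun n => ?_)
    rw [inner_smul_left]; ring
  have hFadd_r : ∀ φ χ χ' : H, F φ (χ + χ') = F φ χ + F φ χ' := by
    intro φ χ χ'
    refine tendsto_nhds_unique (hF φ (χ + χ')) (((hF φ χ).add (hF φ χ')).congr fun n => ?_)
    rw [map_add, inner_add_right]; ring
  have hFsmul_r : ∀ (c : ℂ) (φ χ : H), F φ (c • χ) = c * F φ χ := by
    intro c φ χ
    refine tendsto_nhds_unique (hF φ (c • χ)) ((tendsto_const_nhds.mul (hF φ χ)).congr fun n => ?_)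
    rw [map_smul, inner_smul_right]; ring
  have hFnorm : ∀ φ χ : H, ‖F φ χ‖ ≤ ‖φ‖ * ‖χ‖ := fun φ χ =>
    le_of_tendsto (hF φ χ).norm (Eventually.of_forall fun n => norm_fs_le U θ φ χ n)
  set g : H → (H →L[ℂ] ℂ) := fun χ => LinearMap.mkContinuous
    ({ toFun := fun φ => (starRingEnd ℂ) (F φ χ)
       map_add' := fun φ φ' => by
         show (starRingEnd ℂ) (F (φ + φ') χ) = (starRingEnd ℂ) (F φ χ) + (starRingEnd ℂ) (F φ' χ)
         rw [hFadd_l]; exact map_add _ _ _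
       map_smul' := fun c φ => by
         show (starRingEnd ℂ) (F (c • φ) χ) = (RingHom.id ℂ) c • (starRingEnd ℂ) (F φ χ)
         rw [hFsmul_l]; simp [mul_comm] } : H →ₗ[ℂ] ℂ) ‖χ‖
    (fun φ => by
      simp only [LinearMap.coe_mk, AddHom.coe_mk]
      rw [RCLike.norm_conj]
      calc ‖F φ χ‖ ≤ ‖φ‖ * ‖χ‖ := hFnorm φ χ
        _ = ‖χ‖ * ‖φ‖ := by ring) with hgdef
  have hgapply : ∀ χ φ : H, g χ φ = (starRingEnd ℂ) (F φ χ) := fun χ φ => rfl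
  set A0 : H → H := fun χ => (InnerProductSpace.toDual ℂ H).symm (g χ) with hA0def
  have hA0 : ∀ φ χ : H, (inner ℂ φ (A0 χ) : ℂ) = F φ χ := by
    intro φ χ
    have h1 : (inner ℂ (A0 χ) φ : ℂ) = g χ φ := InnerProductSpace.toDual_symm_apply
    calc (inner ℂ φ (A0 χ) : ℂ) = (starRingEnd ℂ) (inner ℂ (A0 χ) φ) := (inner_conj_symm _ _).symm
      _ = (starRingEnd ℂ) (g χ φ) := by rw [h1]
      _ = F φ χ := by rw [hgapply]; exact Complex.conj_conj _
  have hA0norm : ∀ χ : H, ‖A0 χ‖ ≤ ‖χ‖ := by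
    intro χ
    rw [show ‖A0 χ‖ = ‖g χ‖ from LinearIsometryEquiv.norm_map _ _]
    exact LinearMap.mkContinuous_norm_le _ (norm_nonneg χ) _
  set A : H →L[ℂ] H := LinearMap.mkContinuous
    ({ toFun := A0
       map_add' := fun χ χ' => ext_inner_left ℂ fun v => by
         rw [inner_add_right, hA0, hA0, hA0, hFadd_r]
       map_smul' := fun c χ => ext_inner_left ℂ fun v => by
         simp only [RingHom.id_apply]
         rw [inner_smul_right, hA0, hA0, hFsmul_r] } : H →ₗ[ℂ] H) 1
    (fun χ => by simpa using hA0norm χ) with hAdef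
  have hAapply : ∀ χ : H, A χ = A0 χ := fun _ => rfl
  have hFee : F e e = L := tendsto_nhds_unique (hF e e) hL
  refine ⟨A, ?_, ?_⟩
  · intro h
    apply hL0
    rw [← hFee, ← hA0 e e, ← hAapply, h]
    simp
  · intro φ χ
    rw [hAapply, hA0]
    exact hF φ χ

private lemma forward_L_ne
    (hcyc : Dense ((Submodule.span ℂ (Set.range fun k : ℤ => (U ^ k) e) : Submodule ℂ H) : Set H))
    (A : H →L[ℂ] H) (hA0 : A ≠ 0)
    (hA : ∀ φ χ : H, Tendsto (fun n : ℕ => Complex.exp (-(θ n : ℂ) * Complex.I) *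
      (inner ℂ φ ((U ^ n) χ) : ℂ)) atTop (𝓝 (inner ℂ φ (A χ)))) :
    (inner ℂ e (A e) : ℂ) ≠ 0 := by
  intro h0
  have hexp : ∀ n : ℕ, ‖Complex.exp (-(θ n : ℂ) * Complex.I)‖ = 1 := fun n => by
    simp [Complex.norm_exp]
  have hL : Tendsto (fun n : ℕ => Complex.exp (-(θ n : ℂ) * Complex.I) *
      (inner ℂ e ((U ^ n) e) : ℂ)) atTop (𝓝 0) := h0 ▸ hA e e
  have hnorm : Tendsto (fun n : ℕ => ‖(inner ℂ e ((U ^ n) e) : ℂ)‖) atTop (𝓝 0) := by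
    have h1 := hL.norm
    rw [norm_zero] at h1
    refine h1.congr fun n => ?_
    rw [norm_mul, hexp n, one_mul]
  have key0 : ∀ m : ℤ, Tendsto (fun n : ℕ => ‖(inner ℂ e ((U ^ ((n:ℤ) + m)) e) : ℂ)‖)
      atTop (𝓝 0) := by
    intro m
    have hcomp : Tendsto (fun n : ℕ => ((n:ℤ) + m).toNat) atTop atTop :=
      tendsto_atTop_mono (fun n => by omega) (tendsto_sub_atTop_nat m.natAbs)
    refine (hnorm.comp hcomp).congr' ?_
    filter_upwards [eventually_ge_atTop m.natAbs] with n hn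
    have he : (U ^ (((n:ℤ) + m).toNat)) e = (U ^ ((n:ℤ) + m)) e := by
      rw [← zpow_natCast U (((n:ℤ) + m).toNat), Int.toNat_of_nonneg (by omega)]
    simp only [Function.comp_apply]
    rw [he]
  have gen0 : ∀ a b : ℤ, (inner ℂ ((U^a) e) (A ((U^b) e)) : ℂ) = 0 := by
    intro a b
    have h1 := hA ((U^a) e) ((U^b) e)
    have h2 : Tendsto (fun n : ℕ => Complex.exp (-(θ n : ℂ) * Complex.I) *
        (inner ℂ ((U^a) e) ((U ^ n) ((U^b) e)) : ℂ)) atTop (𝓝 0) := by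
      rw [tendsto_zero_iff_norm_tendsto_zero]
      refine (key0 (b - a)).congr fun n => ?_
      rw [norm_mul, hexp n, one_mul, fs_gen U e a b n]
    exact tendsto_nhds_unique h1 h2
  have spanzero : ∀ φ ∈ Submodule.span ℂ (Set.range fun k : ℤ => (U ^ k) e),
      ∀ χ ∈ Submodule.span ℂ (Set.range fun k : ℤ => (U ^ k) e),
      (inner ℂ φ (A χ) : ℂ) = 0 := by
    intro φ hφ
    induction hφ using Submodule.span_induction with
    | mem x hx =>
      obtain ⟨a, rfl⟩ := hx
      intro χ hχ
      induction hχ using Submodule.span_induction with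
      | mem y hy => obtain ⟨b, rfl⟩ := hy; exact gen0 a b
      | zero => simp
      | add y z hy hz ihy ihz => rw [map_add, inner_add_right, ihy, ihz, add_zero]
      | smul c y hy ihy => rw [map_smul, inner_smul_right, ihy, mul_zero]
    | zero => intro χ hχ; simp
    | add x y hx hy ihx ihy =>
      intro χ hχ; rw [inner_add_left, ihx χ hχ, ihy χ hχ, add_zero]
    | smul c x hx ihx =>
      intro χ hχ; rw [inner_smul_left, ihx χ hχ, mul_zero]
  have step1 : ∀ φ ∈ Submodule.span ℂ (Set.range fun k : ℤ => (U ^ k) e),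
      ∀ χ : H, (inner ℂ φ (A χ) : ℂ) = 0 := by
    intro φ hφ χ
    have hC : IsClosed {y : H | (inner ℂ φ (A y) : ℂ) = 0} :=
      isClosed_eq (Continuous.inner continuous_const A.continuous) continuous_const
    have hsub : ((Submodule.span ℂ (Set.range fun k : ℤ => (U ^ k) e) : Submodule ℂ H) : Set H)
        ⊆ {y : H | (inner ℂ φ (A y) : ℂ) = 0} := fun y hy => spanzero φ hφ y hy
    exact hC.closure_subset_iff.mpr hsub (hcyc χ)
  have allzero : ∀ φ χ : H, (inner ℂ φ (A χ) : ℂ) = 0 := by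
    intro φ χ
    have hC : IsClosed {x : H | (inner ℂ x (A χ) : ℂ) = 0} :=
      isClosed_eq (Continuous.inner continuous_id continuous_const) continuous_const
    have hsub : ((Submodule.span ℂ (Set.range fun k : ℤ => (U ^ k) e) : Submodule ℂ H) : Set H)
        ⊆ {x : H | (inner ℂ x (A χ) : ℂ) = 0} := fun x hx => step1 x hx χ
    exact hC.closure_subset_iff.mpr hsub (hcyc φ)
  apply hA0
  ext χ
  refine ext_inner_left ℂ fun v => ?_
  rw [allzero v χ]
  simp

private lemma forward_w (A : H →L[ℂ] H) (hLne : (inner ℂ e (A e) : ℂ) ≠ 0)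
    (hA : ∀ φ χ : H, Tendsto (fun n : ℕ => Complex.exp (-(θ n : ℂ) * Complex.I) *
      (inner ℂ φ ((U ^ n) χ) : ℂ)) atTop (𝓝 (inner ℂ φ (A χ)))) :
    ∃ w : ℂ, Tendsto (fun n : ℕ => Complex.exp (((θ (n+1) : ℂ) - (θ n : ℂ)) * Complex.I))
      atTop (𝓝 w) := by
  have hL := hA e e
  have hc1 : Tendsto (fun n : ℕ => Complex.exp (-(θ (n+1) : ℂ) * Complex.I) *
      (inner ℂ e ((U ^ (n+1)) e) : ℂ)) atTop (𝓝 (inner ℂ e (A e))) :=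
    hL.comp (tendsto_add_atTop_nat 1)
  have hM : Tendsto (fun n : ℕ => Complex.exp (-(θ n : ℂ) * Complex.I) *
      (inner ℂ e ((U ^ (n+1)) e) : ℂ)) atTop (𝓝 (inner ℂ e (A (U e)))) := by
    refine (hA e (U e)).congr fun n => ?_
    rw [show (U^(n+1)) e = (U^n) (U e) by rw [pow_succ]; rfl]
  have hq := hM.div hc1 hLne
  refine ⟨_, hq.congr' ?_⟩
  filter_upwards [hc1.eventually_ne hLne] with n hn
  have hid : Complex.exp (-(θ n : ℂ) * Complex.I) * (inner ℂ e ((U ^ (n+1)) e) : ℂ)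
      = Complex.exp (((θ (n+1) : ℂ) - (θ n : ℂ)) * Complex.I) *
        (Complex.exp (-(θ (n+1) : ℂ) * Complex.I) * (inner ℂ e ((U ^ (n+1)) e) : ℂ)) := by
    rw [← mul_assoc, ← Complex.exp_add,
      show ((θ (n+1) : ℂ) - (θ n : ℂ)) * Complex.I + (-(θ (n+1) : ℂ) * Complex.I)
        = -(θ n : ℂ) * Complex.I by ring]
  simp only [Pi.div_apply]
  rw [hid, mul_div_assoc, div_self hn, mul_one]

end WLaux

/-- For a unitary `U` on a complex Hilbert space with cyclic vector `e` and a sequence of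
phases `θ_n`: the operators `e^{-iθ_n} U^n` converge in the weak operator topology to a
nonzero limit iff `e^{-iθ_n}⟨e, U^n e⟩` converges to a nonzero limit and
`e^{i(θ_{n+1}-θ_n)}` converges. -/
theorem weak_limit_nonzero_iff_moment_nonzero
    {H : Type*} [NormedAddCommGroup H] [InnerProductSpace ℂ H] [CompleteSpace H]
    (U : H ≃ₗᵢ[ℂ] H) (e : H)
    (hcyc : Dense ((Submodule.span ℂ (Set.range fun k : ℤ => (U ^ k) e) : Submodule ℂ H) : Set H))
    (θ : ℕ → ℝ) :
    (∃ A : H →L[ℂ] H, A ≠ 0 ∧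
        ∀ φ χ : H,
          Tendsto (fun n : ℕ => Complex.exp (-(θ n) * Complex.I) * (inner ℂ φ ((U ^ n) χ) : ℂ))
            atTop (𝓝 (inner ℂ φ (A χ)))) ↔
      ((∃ L : ℂ, L ≠ 0 ∧
          Tendsto (fun n : ℕ => Complex.exp (-(θ n) * Complex.I) * (inner ℂ e ((U ^ n) e) : ℂ))
            atTop (𝓝 L)) ∧
        ∃ w : ℂ,
          Tendsto (fun n : ℕ => Complex.exp ((θ (n + 1) - θ n) * Complex.I)) atTop (𝓝 w)) := by
  constructor
  · rintro ⟨A, hA0, hA⟩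
    have hLne := forward_L_ne U e θ hcyc A hA0 hA
    exact ⟨⟨inner ℂ e (A e), hLne, hA e e⟩, forward_w U e θ A hLne hA⟩
  · rintro ⟨⟨L, hL0, hL⟩, w, hw⟩
    have hw1 : ‖w‖ = 1 := by
      refine tendsto_nhds_unique (hw.norm.congr fun n => ?_) tendsto_const_nhds
      rw [show ((θ (n+1) : ℂ) - (θ n : ℂ)) = ((θ (n+1) - θ n : ℝ) : ℂ) by push_cast; ring]
      simp [Complex.norm_exp]
    have hw0 : w ≠ 0 := by intro h; rw [h] at hw1; simp at hw1
    have hkey := key_lim U e θ L w hw0 hL hw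
    have hspan := span_conv U e θ L w hw0 hkey
    have hcau := all_cauchy U e θ hcyc hspan
    exact build_A U e θ L hL0 hL hcau
end

section
/- Let H be a complex Hilbert space, U a unitary operator on H, and e ∈ H a vector such that the linear span of {U^k e : k ∈ ℤ} is dense in H. Suppose that for some sequence (θ_n) of real numbers the operators e^{−iθ_n} U^n converge in the weak operator topology to a nonzero operator U^∞. Then there exists z₀ ∈ ℂ with |z₀| = 1 such that e^{i(θ_{n+1} − θ_n)} → z₀, z₀ is an eigenvalue of U, the operators z₀^{−n} U^n converge in the weak operator topology to the orthogonal projection P onto the eigenspace {v ∈ H : U v = z₀ v}, and lim_{n→∞} z₀^{−n} ⟨e, U^n e⟩ = ‖P e‖² > 0. -/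
open Filter Topology

/-- If for a unitary `U` with cyclic vector `e` the operators `e^{-iθ_n} U^n` converge in the
weak operator topology to a nonzero operator, then there is `z₀` on the unit circle such that
`e^{i(θ_{n+1}-θ_n)} → z₀`, `z₀` is an eigenvalue of `U`, `z₀^{-n} U^n` converges weakly to the
orthogonal projection `P` onto the eigenspace of `z₀`, and `z₀^{-n}⟨e, U^n e⟩ → ‖P e‖² > 0`. -/
theorem weak_limit_is_projection_onto_eigenspace
    {H : Type*} [NormedAddCommGroup H] [InnerProductSpace ℂ H] [CompleteSpace H]
    (U : H ≃ₗᵢ[ℂ] H) (e : H)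
    (hcyc : Dense ((Submodule.span ℂ (Set.range fun k : ℤ => (U ^ k) e) : Submodule ℂ H) : Set H))
    (θ : ℕ → ℝ) (A : H →L[ℂ] H) (hA : A ≠ 0)
    (hconv : ∀ φ χ : H,
      Tendsto (fun n : ℕ => Complex.exp (-(θ n) * Complex.I) * (inner ℂ φ ((U ^ n) χ) : ℂ))
        atTop (𝓝 (inner ℂ φ (A χ)))) :
    ∃ z₀ : ℂ, ‖z₀‖ = 1 ∧
      Tendsto (fun n : ℕ => Complex.exp ((θ (n + 1) - θ n) * Complex.I)) atTop (𝓝 z₀) ∧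
      (∃ v : H, v ≠ 0 ∧ U v = z₀ • v) ∧
      ∃ P : H →L[ℂ] H,
        -- `P` is the orthogonal projection onto the eigenspace `{v | U v = z₀ • v}`:
        (∀ v : H, U (P v) = z₀ • P v) ∧
        (∀ v w : H, U w = z₀ • w → (inner ℂ (v - P v) w : ℂ) = 0) ∧
        -- `z₀^{-n} U^n → P` in the weak operator topology:
        (∀ φ χ : H,
          Tendsto (fun n : ℕ => z₀ ^ (-(n : ℤ)) * (inner ℂ φ ((U ^ n) χ) : ℂ))
            atTop (𝓝 (inner ℂ φ (P χ)))) ∧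
        -- the moments satisfy `z₀^{-n}⟨e, U^n e⟩ → ‖P e‖² > 0`:
        Tendsto (fun n : ℕ => z₀ ^ (-(n : ℤ)) * (inner ℂ e ((U ^ n) e) : ℂ))
          atTop (𝓝 ((‖P e‖ : ℂ) ^ 2)) ∧
        0 < ‖P e‖ := by
  classical
  set c : ℕ → ℂ := fun n => Complex.exp (-(θ n) * Complex.I) with hc_def
  have hcnorm : ∀ n, ‖c n‖ = 1 := by
    intro n
    simp only [hc_def, Complex.norm_exp]
    norm_num
  have hcne : ∀ n, c n ≠ 0 := fun n => Complex.exp_ne_zero _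
  -- application of powers
  have hpow : ∀ (n : ℕ) (χ : H), (U ^ (n + 1)) χ = (U ^ n) (U χ) := by
    intro n χ; rw [pow_succ]; rfl
  have hpow' : ∀ (n : ℕ) (χ : H), (U ^ (n + 1)) χ = U ((U ^ n) χ) := by
    intro n χ; rw [pow_succ']; rfl
  -- shifted convergence
  have hconvS : ∀ φ χ : H,
      Tendsto (fun n : ℕ => c (n + 1) * (inner ℂ φ ((U ^ (n + 1)) χ) : ℂ)) atTop
        (𝓝 (inner ℂ φ (A χ))) := by
    intro φ χ
    exact (hconv φ χ).comp (tendsto_add_atTop_nat 1)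
  have hconvU : ∀ φ χ : H,
      Tendsto (fun n : ℕ => c n * (inner ℂ φ ((U ^ (n + 1)) χ) : ℂ)) atTop
        (𝓝 (inner ℂ φ (A (U χ)))) := by
    intro φ χ
    have := hconv φ (U χ)
    refine this.congr fun n => ?_
    rw [hpow]
  -- nonzero matrix element
  obtain ⟨χ₀, hχ₀⟩ : ∃ χ₀, A χ₀ ≠ 0 := by
    by_contra h
    push_neg at h
    exact hA (by ext x; simp [h x])
  have hL : (inner ℂ (A χ₀) (A χ₀) : ℂ) ≠ 0 := inner_self_ne_zero.2 hχ₀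
  set φ₀ : H := A χ₀ with hφ₀
  set L : ℂ := inner ℂ φ₀ (A χ₀) with hLdef
  -- the ratio of phases converges
  set z₀ : ℂ := inner ℂ φ₀ (A (U χ₀)) / L with hz₀def
  have hzconv : Tendsto (fun n : ℕ => c n / c (n + 1)) atTop (𝓝 z₀) := by
    have h1 := hconvU φ₀ χ₀
    have h2 := hconvS φ₀ χ₀
    have h3 := h1.div h2 hL
    refine h3.congr' ?_
    have hev := h2.eventually_ne hL
    filter_upwards [hev] with n hn
    have ht : (inner ℂ φ₀ ((U ^ (n + 1)) χ₀) : ℂ) ≠ 0 := by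
      intro h; apply hn; rw [h, mul_zero]
    simp only [Pi.div_apply]
    exact mul_div_mul_right _ _ ht
  have hzconv' : Tendsto (fun n : ℕ => Complex.exp ((θ (n + 1) - θ n) * Complex.I)) atTop
      (𝓝 z₀) := by
    refine hzconv.congr fun n => ?_
    simp only [hc_def]
    rw [div_eq_iff (Complex.exp_ne_zero _), ← Complex.exp_add]
    congr 1
    ring
  have hznorm : ‖z₀‖ = 1 := by
    have := hzconv.norm
    have h1 : Tendsto (fun _ : ℕ => (1 : ℝ)) atTop (𝓝 ‖z₀‖) := by
      refine this.congr fun n => ?_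
      rw [norm_div, hcnorm, hcnorm]
      norm_num
    exact tendsto_nhds_unique h1 tendsto_const_nhds
  have hz₀ne : z₀ ≠ 0 := by
    intro h; rw [h] at hznorm; simp at hznorm
  -- A (U χ) = z₀ • A χ
  have hAUinner : ∀ φ χ : H, (inner ℂ φ (A (U χ)) : ℂ) = z₀ * inner ℂ φ (A χ) := by
    intro φ χ
    have h1 := hconvU φ χ
    have h2 : Tendsto (fun n : ℕ => c n * (inner ℂ φ ((U ^ (n + 1)) χ) : ℂ)) atTop
        (𝓝 (z₀ * inner ℂ φ (A χ))) := by
      have := hzconv.mul (hconvS φ χ)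
      refine this.congr fun n => ?_
      have h4 := hcne (n + 1)
      field_simp
    exact tendsto_nhds_unique h1 h2
  have hAU : ∀ χ : H, A (U χ) = z₀ • A χ := by
    intro χ
    refine ext_inner_left ℂ fun φ => ?_
    rw [hAUinner, inner_smul_right]
  -- U (A χ) = z₀ • A χ
  have hUA : ∀ χ : H, U (A χ) = z₀ • A χ := by
    intro χ
    refine ext_inner_left ℂ fun φ => ?_
    have h1 := hconv (U.symm φ) χ
    have h2 : Tendsto (fun n : ℕ => c n * (inner ℂ (U.symm φ) ((U ^ n) χ) : ℂ)) atTop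
        (𝓝 (inner ℂ φ (A (U χ)))) := by
      refine (hconvU φ χ).congr fun n => ?_
      congr 1
      rw [hpow']
      rw [← U.inner_map_map (U.symm φ) ((U ^ n) χ), U.apply_symm_apply]
    have h3 : (inner ℂ (U.symm φ) (A χ) : ℂ) = inner ℂ φ (A (U χ)) :=
      tendsto_nhds_unique h1 h2
    have h4 : (inner ℂ (U.symm φ) (A χ) : ℂ) = inner ℂ φ (U (A χ)) := by
      rw [← U.inner_map_map (U.symm φ) (A χ), U.apply_symm_apply]
    rw [← h4, h3, hAUinner, inner_smul_right]
  -- A (U⁻¹ χ) = z₀⁻¹ • A χ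
  have hAUinv : ∀ χ : H, A (U.symm χ) = z₀⁻¹ • A χ := by
    intro χ
    have := hAU (U.symm χ)
    rw [U.apply_symm_apply] at this
    rw [eq_comm, inv_smul_eq_iff₀ hz₀ne, ← this]
  -- eigenvector
  set v : H := A χ₀ with hv_def
  have hvne : v ≠ 0 := hχ₀
  have hv : U v = z₀ • v := hUA χ₀
  have hUn_eig : ∀ w : H, U w = z₀ • w → ∀ n : ℕ, (U ^ n) w = z₀ ^ n • w := by
    intro w hw n
    induction n with
    | zero => simp
    | succ n ih => rw [hpow', ih, map_smul, hw, smul_smul, pow_succ]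
  have hUnv : ∀ n : ℕ, (U ^ n) v = z₀ ^ n • v := hUn_eig v hv
  -- c n * z₀ ^ n converges to a unimodular λ
  set lam : ℂ := inner ℂ v (A v) / inner ℂ v v with hlam_def
  have hvv : (inner ℂ v v : ℂ) ≠ 0 := inner_self_ne_zero.2 hvne
  have hlamconv : Tendsto (fun n : ℕ => c n * z₀ ^ n) atTop (𝓝 lam) := by
    have h1 := hconv v v
    have h2 : Tendsto (fun n : ℕ => c n * (inner ℂ v ((U ^ n) v) : ℂ) / inner ℂ v v) atTop
        (𝓝 lam) := h1.div tendsto_const_nhds hvv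
    refine h2.congr fun n => ?_
    rw [hUnv, inner_smul_right]
    field_simp
  have hlamnorm : ‖lam‖ = 1 := by
    have h1 : Tendsto (fun _ : ℕ => (1 : ℝ)) atTop (𝓝 ‖lam‖) := by
      refine hlamconv.norm.congr fun n => ?_
      rw [norm_mul, hcnorm, norm_pow, hznorm]
      norm_num
    exact tendsto_nhds_unique h1 tendsto_const_nhds
  have hlamne : lam ≠ 0 := by
    intro h; rw [h] at hlamnorm; simp at hlamnorm
  -- the projection
  set P : H →L[ℂ] H := lam⁻¹ • A with hP_def
  have hPapp : ∀ χ : H, P χ = lam⁻¹ • A χ := fun χ => rfl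
  -- weak convergence to P
  have hweak : ∀ φ χ : H,
      Tendsto (fun n : ℕ => z₀ ^ (-(n : ℤ)) * (inner ℂ φ ((U ^ n) χ) : ℂ))
        atTop (𝓝 (inner ℂ φ (P χ))) := by
    intro φ χ
    have h1 : Tendsto (fun n : ℕ => (c n * z₀ ^ n)⁻¹ * (c n * (inner ℂ φ ((U ^ n) χ) : ℂ)))
        atTop (𝓝 (lam⁻¹ * inner ℂ φ (A χ))) := (hlamconv.inv₀ hlamne).mul (hconv φ χ)
    have h2 : inner ℂ φ (P χ) = lam⁻¹ * (inner ℂ φ (A χ) : ℂ) := by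
      rw [hPapp, inner_smul_right]
    rw [h2]
    refine h1.congr fun n => ?_
    rw [zpow_neg, zpow_natCast, mul_inv]
    have hcn := hcne n
    have hzn : z₀ ^ n ≠ 0 := pow_ne_zero n hz₀ne
    field_simp
  -- U (P χ) = z₀ • P χ
  have hUP : ∀ χ : H, U (P χ) = z₀ • P χ := by
    intro χ
    rw [hPapp, map_smul, hUA, smul_comm]
  -- conjugate of z₀
  have hconj : (starRingEnd ℂ) z₀ = z₀⁻¹ := by
    have h1 : z₀ * (starRingEnd ℂ) z₀ = 1 := by
      rw [Complex.mul_conj]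
      norm_cast
      rw [Complex.normSq_eq_norm_sq, hznorm]
      norm_num
    field_simp [hz₀ne] at h1 ⊢
    linear_combination h1
  -- P fixes the eigenspace
  have hPfix : ∀ w : H, U w = z₀ • w → P w = w := by
    intro w hw
    refine ext_inner_left ℂ fun φ => ?_
    have h1 := hweak φ w
    have h2 : Tendsto (fun _ : ℕ => (inner ℂ φ w : ℂ)) atTop (𝓝 (inner ℂ φ (P w))) := by
      refine h1.congr fun n => ?_
      rw [hUn_eig w hw n, inner_smul_right, zpow_neg, zpow_natCast]
      have hzn : z₀ ^ n ≠ 0 := pow_ne_zero n hz₀ne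
      field_simp
    exact (tendsto_nhds_unique h2 tendsto_const_nhds)
  -- orthogonality
  have horth : ∀ x w : H, U w = z₀ • w → (inner ℂ (x - P x) w : ℂ) = 0 := by
    intro x w hw
    have key : (inner ℂ w (P x) : ℂ) = inner ℂ w x := by
      have h1 := hweak w x
      have h2 : Tendsto (fun _ : ℕ => (inner ℂ w x : ℂ)) atTop (𝓝 (inner ℂ w (P x))) := by
        refine h1.congr fun n => ?_
        have hiter : (inner ℂ w ((U ^ n) x) : ℂ) = z₀ ^ n * inner ℂ w x := by
          induction n with
          | zero => simp
          | succ n ih =>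
              have hsymm : U.symm w = z₀⁻¹ • w := by
                have h := congrArg U.symm hw
                rw [U.symm_apply_apply, map_smul] at h
                rw [eq_comm, inv_smul_eq_iff₀ hz₀ne]
                exact h
              calc (inner ℂ w ((U ^ (n+1)) x) : ℂ)
                  = inner ℂ (U.symm w) ((U ^ n) x) := by
                    rw [hpow', ← U.inner_map_map (U.symm w) ((U ^ n) x), U.apply_symm_apply]
                _ = z₀ * inner ℂ w ((U ^ n) x) := by
                    rw [hsymm, inner_smul_left, map_inv₀, hconj, inv_inv]
                _ = z₀ ^ (n+1) * inner ℂ w x := by rw [ih, pow_succ]; ring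
        rw [hiter, zpow_neg, zpow_natCast]
        have hzn : z₀ ^ n ≠ 0 := pow_ne_zero n hz₀ne
        field_simp
      exact tendsto_nhds_unique h2 tendsto_const_nhds
    have : (inner ℂ w (x - P x) : ℂ) = 0 := by
      rw [inner_sub_right, key, sub_self]
    rw [← inner_conj_symm, this, map_zero]
  -- P e ≠ 0
  have hAe : A e ≠ 0 := by
    intro hAe
    apply hA
    have hker : ∀ k : ℤ, A ((U ^ k) e) = 0 := by
      have hstep : ∀ x : H, A ((U ^ (1:ℤ)) x) = z₀ • A x := by
        intro x; rw [zpow_one]; exact hAU x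
      intro k
      induction k using Int.induction_on with
      | zero => simpa using hAe
      | succ i ih =>
          have : (U ^ ((i:ℤ) + 1)) e = U ((U ^ (i:ℤ)) e) := by
            rw [add_comm, zpow_one_add]; rfl
          rw [this, hAU, ih, smul_zero]
      | pred i ih =>
          have h1 : (U ^ (-(i:ℤ) - 1)) e = U⁻¹ ((U ^ (-(i:ℤ))) e) := by
            rw [show (-(i:ℤ) - 1) = (-1) + (-(i:ℤ)) by ring, zpow_add, zpow_neg_one]
            rfl
          have h2 : (U⁻¹ : H ≃ₗᵢ[ℂ] H) = U.symm := rfl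
          rw [h1, h2, hAUinv, ih, smul_zero]
    have hsub : (Submodule.span ℂ (Set.range fun k : ℤ => (U ^ k) e) : Submodule ℂ H)
        ≤ LinearMap.ker (A : H →ₗ[ℂ] H) := by
      rw [Submodule.span_le]
      rintro x ⟨k, rfl⟩
      exact hker k
    have hclosed : IsClosed (LinearMap.ker (A : H →ₗ[ℂ] H) : Set H) := ContinuousLinearMap.isClosed_ker A
    have hall : ∀ x : H, A x = 0 := by
      intro x
      have hx : x ∈ closure ((Submodule.span ℂ (Set.range fun k : ℤ => (U ^ k) e)
          : Submodule ℂ H) : Set H) := hcyc x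
      have := closure_mono hsub hx
      rwa [hclosed.closure_eq] at this
    ext x; simp [hall x]
  have hPe : P e ≠ 0 := by
    rw [hPapp]
    simp [hAe, hlamne]
  -- moments
  have hmom : Tendsto (fun n : ℕ => z₀ ^ (-(n : ℤ)) * (inner ℂ e ((U ^ n) e) : ℂ))
      atTop (𝓝 ((‖P e‖ : ℂ) ^ 2)) := by
    have h1 := hweak e e
    have h2 : (inner ℂ e (P e) : ℂ) = (‖P e‖ : ℂ) ^ 2 := by
      have h3 : (inner ℂ (e - P e) (P e) : ℂ) = 0 := horth e (P e) (hUP e)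
      rw [inner_sub_left, sub_eq_zero] at h3
      rw [h3, inner_self_eq_norm_sq_to_K]
      rfl
    rwa [h2] at h1
  exact ⟨z₀, hznorm, hzconv', ⟨v, hvne, hv⟩, P, hUP, horth, hweak, hmom,
    norm_pos_iff.2 hPe⟩
end

section
/- Let μ be a finite positive Borel measure on the unit circle 𝕋 and let f(z) = Σ_{k=p}^{q} a_k z^k (p ≤ q integers, a_k ∈ ℂ) be a Laurent polynomial; set f*(z) = Σ_{k=p}^{q} conj(a_k) z^{−k}. Then there exists a Laurent polynomial L such that for every z ∈ ℂ with 0 < |z| < 1, ∫_𝕋 (t + z)/(t − z) · |f(t)|² dμ(t) = L(z) + f(z) f*(z) · ∫_𝕋 (t + z)/(t − z) dμ(t). In particular, since f(t) f*(t) = |f(t)|² for |t| = 1, the radial boundary values of the Carathéodory function of the measure |f|² dμ lie in L²(dθ/2π) if and only if those of |f(e^{iθ})|² F(e^{iθ}) do, where F is the Carathéodory function of μ. -/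
open MeasureTheory

namespace CaraAux

/-- Predicate: `h` agrees with a Laurent polynomial on the punctured disk. -/
def IsLP (h : ℂ → ℂ) : Prop :=
  ∃ (p' q' : ℤ) (b : ℤ → ℂ), ∀ z : ℂ, 0 < ‖z‖ → ‖z‖ < 1 →
    h z = ∑ k ∈ Finset.Icc p' q', b k * z ^ k

lemma IsLP.congr {h₁ h₂ : ℂ → ℂ} (h : IsLP h₁)
    (e : ∀ z : ℂ, 0 < ‖z‖ → ‖z‖ < 1 → h₂ z = h₁ z) : IsLP h₂ := by
  obtain ⟨p', q', b, hb⟩ := h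
  exact ⟨p', q', b, fun z h1 h2 => (e z h1 h2).trans (hb z h1 h2)⟩

lemma IsLP_zero : IsLP (fun _ => 0) := ⟨0, 0, 0, by simp⟩

lemma IsLP_monomial (c : ℂ) (e : ℤ) : IsLP (fun z => c * z ^ e) :=
  ⟨e, e, fun _ => c, fun z _ _ => by simp⟩

lemma sum_extend {p₁ q₁ P Q : ℤ} (hP : P ≤ p₁) (hQ : q₁ ≤ Q) (b : ℤ → ℂ) (z : ℂ) :
    ∑ k ∈ Finset.Icc P Q, (if k ∈ Finset.Icc p₁ q₁ then b k else 0) * z ^ k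
      = ∑ k ∈ Finset.Icc p₁ q₁, b k * z ^ k := by
  rw [← Finset.sum_subset (Finset.Icc_subset_Icc hP hQ)
    (fun x _ hx => by simp [hx])]
  exact Finset.sum_congr rfl fun x hx => by simp [hx]

lemma IsLP.add {h₁ h₂ : ℂ → ℂ} (H₁ : IsLP h₁) (H₂ : IsLP h₂) :
    IsLP (fun z => h₁ z + h₂ z) := by
  obtain ⟨p₁, q₁, b₁, hb₁⟩ := H₁
  obtain ⟨p₂, q₂, b₂, hb₂⟩ := H₂
  refine ⟨min p₁ p₂, max q₁ q₂, fun k =>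
    (if k ∈ Finset.Icc p₁ q₁ then b₁ k else 0) +
    (if k ∈ Finset.Icc p₂ q₂ then b₂ k else 0), fun z hz0 hz1 => ?_⟩
  simp only [add_mul, Finset.sum_add_distrib]
  rw [sum_extend (min_le_left _ _) (le_max_left _ _),
    sum_extend (min_le_right _ _) (le_max_right _ _),
    hb₁ z hz0 hz1, hb₂ z hz0 hz1]

lemma IsLP_sum {ι : Type*} (s : Finset ι) (h : ι → ℂ → ℂ) (H : ∀ i ∈ s, IsLP (h i)) :
    IsLP (fun z => ∑ i ∈ s, h i z) := by
  induction s using Finset.cons_induction with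
  | empty => simpa using IsLP_zero
  | cons i s his ih =>
      simp only [Finset.sum_cons]
      exact (H i (Finset.mem_cons_self i s)).add
        (ih fun j hj => H j (Finset.mem_cons_of_mem hj))

lemma IsLP.const_mul {h : ℂ → ℂ} (H : IsLP h) (c : ℂ) : IsLP (fun z => c * h z) := by
  obtain ⟨p', q', b, hb⟩ := H
  refine ⟨p', q', fun k => c * b k, fun z hz0 hz1 => ?_⟩
  simp only
  rw [hb z hz0 hz1, Finset.mul_sum]
  exact Finset.sum_congr rfl fun k _ => by ring

/-- The correction kernel. -/
noncomputable def G (n : ℤ) (t z : ℂ) : ℂ :=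
  if 0 ≤ n then (t + z) * ∑ i ∈ Finset.range n.toNat, t ^ (i : ℤ) * z ^ (n - 1 - i)
  else -((t + z) * ∑ i ∈ Finset.range (-n).toNat, t ^ ((i : ℤ) + n) * z ^ (-1 - (i : ℤ)))

lemma G_mul (n : ℤ) {t z : ℂ} (ht : t ≠ 0) (hz : z ≠ 0) :
    G n t z * (t - z) = (t + z) * (t ^ n - z ^ n) := by
  rcases le_or_gt 0 n with hn | hn
  · set N := n.toNat with hN
    have hnN : n = (N : ℤ) := (Int.toNat_of_nonneg hn).symm
    rw [G, if_pos hn]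
    have hsum : ∑ i ∈ Finset.range N, t ^ (i : ℤ) * z ^ (n - 1 - i)
        = ∑ i ∈ Finset.range N, t ^ i * z ^ (N - 1 - i) := by
      refine Finset.sum_congr rfl fun i hi => ?_
      have hi' : i < N := Finset.mem_range.mp hi
      have : n - 1 - (i : ℤ) = ((N - 1 - i : ℕ) : ℤ) := by
        rw [hnN]; omega
      rw [this, zpow_natCast, zpow_natCast]
    rw [hsum, mul_assoc, geom_sum₂_mul, hnN, zpow_natCast, zpow_natCast]
  · set M := (-n).toNat with hM
    have hnM : n = -(M : ℤ) := by rw [hM]; omega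
    rw [G, if_neg (not_le.mpr hn)]
    have hsum : ∑ i ∈ Finset.range M, t ^ ((i : ℤ) + n) * z ^ (-1 - (i : ℤ))
        = t ^ n * z ^ (-(M : ℤ)) * ∑ i ∈ Finset.range M, t ^ i * z ^ (M - 1 - i) := by
      rw [Finset.mul_sum]
      refine Finset.sum_congr rfl fun i hi => ?_
      have hi' : i < M := Finset.mem_range.mp hi
      have h1 : t ^ ((i : ℤ) + n) = t ^ n * t ^ (i : ℤ) := by
        rw [← zpow_add₀ ht]; ring_nf
      have h2 : (-1 - (i : ℤ)) = -(M : ℤ) + ((M - 1 - i : ℕ) : ℤ) := by omega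
      rw [h1, h2, zpow_add₀ hz, zpow_natCast, zpow_natCast]
      ring
    rw [hsum]
    have hgeom := geom_sum₂_mul t z M
    have htM : t ^ n * t ^ (M : ℤ) = 1 := by
      rw [← zpow_add₀ ht, hnM]; simp
    have hzM : z ^ (-(M : ℤ)) * z ^ (M : ℤ) = 1 := by
      rw [← zpow_add₀ hz]; simp
    calc -((t + z) * (t ^ n * z ^ (-(M : ℤ)) * ∑ i ∈ Finset.range M, t ^ i * z ^ (M - 1 - i))) * (t - z)
        = -((t + z) * (t ^ n * z ^ (-(M : ℤ)) * ((∑ i ∈ Finset.range M, t ^ i * z ^ (M - 1 - i)) * (t - z)))) := by ring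
      _ = -((t + z) * (t ^ n * z ^ (-(M : ℤ)) * (t ^ M - z ^ M))) := by rw [hgeom]
      _ = (t + z) * (t ^ n - z ^ n) := by
          have e1 : (t ^ M : ℂ) = t ^ (M : ℤ) := (zpow_natCast t M).symm
          have e2 : (z ^ M : ℂ) = z ^ (M : ℤ) := (zpow_natCast z M).symm
          rw [e1, e2]
          have : t ^ n * z ^ (-(M : ℤ)) * (t ^ (M : ℤ) - z ^ (M : ℤ))
              = z ^ (-(M : ℤ)) * (t ^ n * t ^ (M : ℤ)) - t ^ n * (z ^ (-(M : ℤ)) * z ^ (M : ℤ)) := by ring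
          rw [this, htM, hzM, hnM]
          ring

lemma key (n : ℤ) {t z : ℂ} (ht : t ≠ 0) (hz : z ≠ 0) (htz : t ≠ z) :
    (t + z) / (t - z) * t ^ n = G n t z + z ^ n * ((t + z) / (t - z)) := by
  have hne : t - z ≠ 0 := sub_ne_zero.mpr htz
  have h1 : G n t z = (t + z) * (t ^ n - z ^ n) / (t - z) :=
    (eq_div_iff hne).mpr (G_mul n ht hz)
  rw [h1]
  field_simp
  ring

lemma G_eq_pos (n : ℤ) (hn : 0 ≤ n) {t z : ℂ} (ht : t ≠ 0) (hz : z ≠ 0) :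
    G n t z = ∑ i ∈ Finset.range n.toNat,
      (t ^ ((i : ℤ) + 1) * z ^ (n - 1 - i) + t ^ (i : ℤ) * z ^ (n - (i : ℤ))) := by
  rw [G, if_pos hn, Finset.mul_sum]
  refine Finset.sum_congr rfl fun i hi => ?_
  have h1 : t ^ ((i : ℤ) + 1) = t ^ (i : ℤ) * t := zpow_add_one₀ ht _
  have h2 : z ^ (n - (i : ℤ)) = z ^ (n - 1 - (i : ℤ)) * z := by
    rw [← zpow_add_one₀ hz]; ring_nf
  rw [h1, h2]; ring

lemma G_eq_neg (n : ℤ) (hn : n < 0) {t z : ℂ} (ht : t ≠ 0) (hz : z ≠ 0) :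
    G n t z = ∑ i ∈ Finset.range (-n).toNat,
      ((-(t ^ ((i : ℤ) + n + 1))) * z ^ (-1 - (i : ℤ)) + (-(t ^ ((i : ℤ) + n))) * z ^ (-(i : ℤ))) := by
  rw [G, if_neg (not_le.mpr hn), Finset.mul_sum, ← Finset.sum_neg_distrib]
  refine Finset.sum_congr rfl fun i hi => ?_
  have h1 : t ^ ((i : ℤ) + n + 1) = t ^ ((i : ℤ) + n) * t := zpow_add_one₀ ht _
  have h2 : z ^ (-(i : ℤ)) = z ^ (-1 - (i : ℤ)) * z := by
    rw [← zpow_add_one₀ hz]; ring_nf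
  rw [h1, h2]; ring

variable {μ : Measure ℂ} [IsFiniteMeasure μ]

lemma integrable_zpow (hae : ∀ᵐ t ∂μ, ‖t‖ = 1) (r : ℤ) :
    Integrable (fun t : ℂ => t ^ r) μ := by
  refine Integrable.mono' (integrable_const 1)
    ((measurable_id.pow_const r).aestronglyMeasurable) ?_
  filter_upwards [hae] with t ht
  rw [norm_zpow, ht, one_zpow]

lemma integrable_kernel (hae : ∀ᵐ t ∂μ, ‖t‖ = 1) {z : ℂ} (hz1 : ‖z‖ < 1) :
    Integrable (fun t : ℂ => (t + z) / (t - z)) μ := by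
  refine Integrable.mono' (integrable_const (2 / (1 - ‖z‖)))
    (((measurable_id.add_const z).div (measurable_id.sub_const z)).aestronglyMeasurable) ?_
  filter_upwards [hae] with t ht
  have hpos : (0:ℝ) < 1 - ‖z‖ := by linarith
  have h1 : 1 - ‖z‖ ≤ ‖t - z‖ := by
    have := norm_sub_norm_le t z
    rw [ht] at this; linarith
  have h2 : ‖t + z‖ ≤ 2 := by
    have := norm_add_le t z
    rw [ht] at this; linarith
  rw [norm_div]
  exact div_le_div₀ (by norm_num) h2 hpos h1

lemma ae_ne_zero (hae : ∀ᵐ t ∂μ, ‖t‖ = 1) : ∀ᵐ t ∂μ, (t : ℂ) ≠ 0 := by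
  filter_upwards [hae] with t ht
  intro h; rw [h] at ht; simp at ht

lemma integrable_G (hae : ∀ᵐ t ∂μ, ‖t‖ = 1) (n : ℤ) {z : ℂ} (hz : z ≠ 0) :
    Integrable (fun t => G n t z) μ := by
  rcases le_or_gt 0 n with hn | hn
  · refine (integrable_finset_sum (f := fun (i : ℕ) (t : ℂ) =>
      t ^ ((i : ℤ) + 1) * z ^ (n - 1 - (i : ℤ)) + t ^ (i : ℤ) * z ^ (n - (i : ℤ)))
      (Finset.range n.toNat) (fun i _ =>
      ((integrable_zpow hae _).mul_const _).add ((integrable_zpow hae _).mul_const _))).congr ?_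
    filter_upwards [ae_ne_zero hae] with t ht
    exact (G_eq_pos n hn ht hz).symm
  · refine (integrable_finset_sum (f := fun (i : ℕ) (t : ℂ) =>
      (-(t ^ ((i : ℤ) + n + 1))) * z ^ (-1 - (i : ℤ)) + (-(t ^ ((i : ℤ) + n))) * z ^ (-(i : ℤ)))
      (Finset.range (-n).toNat) (fun i _ =>
      ((integrable_zpow hae _).neg.mul_const _).add ((integrable_zpow hae _).neg.mul_const _))).congr ?_
    filter_upwards [ae_ne_zero hae] with t ht
    exact (G_eq_neg n hn ht hz).symm

lemma LP_G (hae : ∀ᵐ t ∂μ, ‖t‖ = 1) (n : ℤ) : IsLP (fun z => ∫ t, G n t z ∂μ) := by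
  rcases le_or_gt 0 n with hn | hn
  · refine (IsLP_sum (Finset.range n.toNat) (fun i z =>
      (∫ t : ℂ, t ^ ((i : ℤ) + 1) ∂μ) * z ^ (n - 1 - i)
        + (∫ t : ℂ, t ^ (i : ℤ) ∂μ) * z ^ (n - (i : ℤ)))
      (fun i _ => (IsLP_monomial _ _).add (IsLP_monomial _ _))).congr ?_
    intro z hz0 hz1
    have hz : z ≠ 0 := norm_pos_iff.mp hz0
    have h1 : ∫ t, G n t z ∂μ
        = ∫ t, ∑ i ∈ Finset.range n.toNat,
            (t ^ ((i : ℤ) + 1) * z ^ (n - 1 - i) + t ^ (i : ℤ) * z ^ (n - (i : ℤ))) ∂μ := by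
      refine integral_congr_ae ?_
      filter_upwards [ae_ne_zero hae] with t ht
      exact G_eq_pos n hn ht hz
    rw [h1, integral_finset_sum (f := fun (i : ℕ) (t : ℂ) =>
      t ^ ((i : ℤ) + 1) * z ^ (n - 1 - (i : ℤ)) + t ^ (i : ℤ) * z ^ (n - (i : ℤ))) _ (fun i _ =>
      ((integrable_zpow hae _).mul_const _).add ((integrable_zpow hae _).mul_const _))]
    refine Finset.sum_congr rfl fun i _ => ?_
    rw [integral_add ((integrable_zpow hae _).mul_const _) ((integrable_zpow hae _).mul_const _),
      integral_mul_const, integral_mul_const]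
  · refine (IsLP_sum (Finset.range (-n).toNat) (fun i z =>
      (∫ t : ℂ, -(t ^ ((i : ℤ) + n + 1)) ∂μ) * z ^ (-1 - (i : ℤ))
        + (∫ t : ℂ, -(t ^ ((i : ℤ) + n)) ∂μ) * z ^ (-(i : ℤ)))
      (fun i _ => (IsLP_monomial _ _).add (IsLP_monomial _ _))).congr ?_
    intro z hz0 hz1
    have hz : z ≠ 0 := norm_pos_iff.mp hz0
    have h1 : ∫ t, G n t z ∂μ
        = ∫ t, ∑ i ∈ Finset.range (-n).toNat,
            ((-(t ^ ((i : ℤ) + n + 1))) * z ^ (-1 - (i : ℤ))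
              + (-(t ^ ((i : ℤ) + n))) * z ^ (-(i : ℤ))) ∂μ := by
      refine integral_congr_ae ?_
      filter_upwards [ae_ne_zero hae] with t ht
      exact G_eq_neg n hn ht hz
    rw [h1, integral_finset_sum (f := fun (i : ℕ) (t : ℂ) =>
      (-(t ^ ((i : ℤ) + n + 1))) * z ^ (-1 - (i : ℤ)) + (-(t ^ ((i : ℤ) + n))) * z ^ (-(i : ℤ))) _
      (fun i _ =>
      ((integrable_zpow hae _).neg.mul_const _).add ((integrable_zpow hae _).neg.mul_const _))]
    refine Finset.sum_congr rfl fun i _ => ?_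
    have I1 : Integrable (fun t : ℂ => -t ^ ((i : ℤ) + n + 1) * z ^ (-1 - (i : ℤ))) μ :=
      (integrable_zpow hae _).neg.mul_const _
    have I2 : Integrable (fun t : ℂ => -t ^ ((i : ℤ) + n) * z ^ (-(i : ℤ))) μ :=
      (integrable_zpow hae _).neg.mul_const _
    rw [integral_add I1 I2, integral_mul_const, integral_mul_const]

end CaraAux

open CaraAux

/-- For a finite positive measure `μ` on the unit circle and a Laurent polynomial
`f(z) = Σ_{k=p}^{q} a_k z^k`, with `f*(z) = Σ_{k=p}^{q} conj(a_k) z^{-k}`, there is a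
Laurent polynomial `L` such that for all `0 < |z| < 1`,
`∫ (t+z)/(t-z)·|f(t)|² dμ(t) = L(z) + f(z)·f*(z)·∫ (t+z)/(t-z) dμ(t)`. -/
theorem caratheodory_of_polynomial_modification
    (μ : Measure ℂ) [IsFiniteMeasure μ] (hsupp : μ {t : ℂ | ‖t‖ ≠ 1} = 0)
    (p q : ℤ) (hpq : p ≤ q) (a : ℤ → ℂ) :
    ∃ (p' q' : ℤ) (b : ℤ → ℂ), ∀ z : ℂ, 0 < ‖z‖ → ‖z‖ < 1 →
      (∫ t, ((t + z) / (t - z)) * ((‖∑ k ∈ Finset.Icc p q, a k * t ^ k‖ : ℂ) ^ 2) ∂μ)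
        = (∑ k ∈ Finset.Icc p' q', b k * z ^ k)
          + (∑ k ∈ Finset.Icc p q, a k * z ^ k) *
              (∑ k ∈ Finset.Icc p q, (starRingEnd ℂ) (a k) * z ^ (-k)) *
              ∫ t, (t + z) / (t - z) ∂μ := by
  have hae : ∀ᵐ t ∂μ, ‖t‖ = 1 := by
    rw [ae_iff]
    exact hsupp
  have hL : IsLP (fun z => ∑ j ∈ Finset.Icc p q, ∑ k ∈ Finset.Icc p q,
      (a j * (starRingEnd ℂ) (a k)) * ∫ t, G (j - k) t z ∂μ) :=
    IsLP_sum _ _ fun j _ => IsLP_sum _ _ fun k _ => (LP_G hae (j - k)).const_mul _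
  obtain ⟨p', q', b, hb⟩ := hL
  refine ⟨p', q', b, fun z hz0 hz1 => ?_⟩
  have hz : z ≠ 0 := norm_pos_iff.mp hz0
  -- pointwise identity a.e.
  have hpt : ∀ᵐ t ∂μ, ((t + z) / (t - z)) * ((‖∑ k ∈ Finset.Icc p q, a k * t ^ k‖ : ℂ) ^ 2)
      = ∑ j ∈ Finset.Icc p q, ∑ k ∈ Finset.Icc p q,
          (a j * (starRingEnd ℂ) (a k)) * (G (j - k) t z + z ^ (j - k) * ((t + z) / (t - z))) := by
    filter_upwards [hae] with t ht
    have ht0 : t ≠ 0 := fun h => by rw [h] at ht; simp at ht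
    have htz : t ≠ z := fun h => by rw [h] at ht; exact absurd ht (ne_of_lt hz1)
    have hconj : (starRingEnd ℂ) t = t⁻¹ := by
      refine eq_inv_of_mul_eq_one_right ?_
      rw [Complex.mul_conj]
      norm_cast
      rw [Complex.normSq_eq_norm_sq, ht]
      norm_num
    have hmod : ((‖∑ k ∈ Finset.Icc p q, a k * t ^ k‖ : ℂ)) ^ 2
        = (∑ j ∈ Finset.Icc p q, a j * t ^ j)
          * (∑ k ∈ Finset.Icc p q, (starRingEnd ℂ) (a k) * t ^ (-k)) := by
      have hw : ∀ w : ℂ, ((‖w‖ : ℂ)) ^ 2 = w * (starRingEnd ℂ) w := fun w => by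
        rw [Complex.mul_conj]; norm_cast
        rw [Complex.normSq_eq_norm_sq]
      rw [hw, map_sum]
      congr 1
      refine Finset.sum_congr rfl fun k _ => ?_
      rw [map_mul, map_zpow₀, hconj, inv_zpow, ← zpow_neg]
    rw [hmod, Finset.sum_mul_sum, Finset.mul_sum]
    refine Finset.sum_congr rfl fun j _ => ?_
    rw [Finset.mul_sum]
    refine Finset.sum_congr rfl fun k _ => ?_
    have hjk : t ^ (j - k) = t ^ j * t ^ (-k) := by
      rw [← zpow_add₀ ht0]; ring_nf
    have hkey := key (j - k) ht0 hz htz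
    calc (t + z) / (t - z) * (a j * t ^ j * ((starRingEnd ℂ) (a k) * t ^ (-k)))
        = (a j * (starRingEnd ℂ) (a k)) * ((t + z) / (t - z) * t ^ (j - k)) := by
          rw [hjk]; ring
      _ = (a j * (starRingEnd ℂ) (a k))
            * (G (j - k) t z + z ^ (j - k) * ((t + z) / (t - z))) := by rw [hkey]
  rw [integral_congr_ae hpt]
  have hker := integrable_kernel hae hz1
  have hint : ∀ j k : ℤ, Integrable (fun t =>
      (a j * (starRingEnd ℂ) (a k)) * (G (j - k) t z + z ^ (j - k) * ((t + z) / (t - z)))) μ :=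
    fun j k => ((integrable_G hae (j - k) hz).add (hker.const_mul _)).const_mul _
  rw [integral_finset_sum _ (fun j _ => integrable_finset_sum _ (fun k _ => hint j k))]
  have hsplit : ∀ j k : ℤ, (∫ t, (a j * (starRingEnd ℂ) (a k))
      * (G (j - k) t z + z ^ (j - k) * ((t + z) / (t - z))) ∂μ)
      = (a j * (starRingEnd ℂ) (a k)) * (∫ t, G (j - k) t z ∂μ)
        + (a j * (starRingEnd ℂ) (a k)) * z ^ (j - k) * ∫ t, (t + z) / (t - z) ∂μ := by
    intro j k
    rw [integral_const_mul, integral_add (integrable_G hae (j - k) hz) (hker.const_mul _),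
      integral_const_mul]
    ring
  have hfz : (∑ k ∈ Finset.Icc p q, a k * z ^ k)
      * (∑ k ∈ Finset.Icc p q, (starRingEnd ℂ) (a k) * z ^ (-k))
      = ∑ j ∈ Finset.Icc p q, ∑ k ∈ Finset.Icc p q,
          (a j * (starRingEnd ℂ) (a k)) * z ^ (j - k) := by
    rw [Finset.sum_mul_sum]
    refine Finset.sum_congr rfl fun j _ => Finset.sum_congr rfl fun k _ => ?_
    have : z ^ (j - k) = z ^ j * z ^ (-k) := by rw [← zpow_add₀ hz]; ring_nf
    rw [this]; ring
  calc ∑ j ∈ Finset.Icc p q, ∫ t, ∑ k ∈ Finset.Icc p q,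
          (a j * (starRingEnd ℂ) (a k)) * (G (j - k) t z + z ^ (j - k) * ((t + z) / (t - z))) ∂μ
      = ∑ j ∈ Finset.Icc p q, ∑ k ∈ Finset.Icc p q,
          ((a j * (starRingEnd ℂ) (a k)) * (∫ t, G (j - k) t z ∂μ)
            + (a j * (starRingEnd ℂ) (a k)) * z ^ (j - k) * ∫ t, (t + z) / (t - z) ∂μ) := by
        refine Finset.sum_congr rfl fun j _ => ?_
        rw [integral_finset_sum _ (fun k _ => hint j k)]
        exact Finset.sum_congr rfl fun k _ => hsplit j k
    _ = (∑ j ∈ Finset.Icc p q, ∑ k ∈ Finset.Icc p q,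
          (a j * (starRingEnd ℂ) (a k)) * ∫ t, G (j - k) t z ∂μ)
        + (∑ j ∈ Finset.Icc p q, ∑ k ∈ Finset.Icc p q,
          (a j * (starRingEnd ℂ) (a k)) * z ^ (j - k)) * ∫ t, (t + z) / (t - z) ∂μ := by
        rw [Finset.sum_mul]
        rw [← Finset.sum_add_distrib]
        refine Finset.sum_congr rfl fun j _ => ?_
        rw [Finset.sum_mul, ← Finset.sum_add_distrib]
    _ = (∑ k ∈ Finset.Icc p' q', b k * z ^ k)
        + (∑ k ∈ Finset.Icc p q, a k * z ^ k) *
            (∑ k ∈ Finset.Icc p q, (starRingEnd ℂ) (a k) * z ^ (-k)) *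
            ∫ t, (t + z) / (t - z) ∂μ := by
        rw [← hb z hz0 hz1, hfz]
end

section
/- Let H be a complex Hilbert space, U a unitary operator on H, and e ∈ H. If Σ_{n=1}^∞ |⟨e, U^n e⟩|² < ∞, then for every vector ψ that is a finite linear combination of vectors U^k e with k ∈ ℤ, one also has Σ_{n=1}^∞ |⟨ψ, U^n ψ⟩|² < ∞. -/
private lemma l2_add_aux (f g : ℕ → ℂ) (hf : Summable fun n => ‖f n‖ ^ 2)
    (hg : Summable fun n => ‖g n‖ ^ 2) : Summable fun n => ‖f n + g n‖ ^ 2 := by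
  refine Summable.of_nonneg_of_le (fun n => by positivity) (fun n => ?_)
    (((hf.add hg).mul_left 2))
  have h := norm_add_le (f n) (g n)
  have h1 : (0:ℝ) ≤ ‖f n + g n‖ := norm_nonneg _
  nlinarith [sq_nonneg (‖f n‖ - ‖g n‖), norm_nonneg (f n), norm_nonneg (g n)]

/-- If `Σ_{n≥1} |⟨e, U^n e⟩|² < ∞` for a unitary `U` on a complex Hilbert space, then the same
holds for every finite linear combination `ψ` of the vectors `U^k e`, `k ∈ ℤ`. -/
theorem transient_of_cyclic_transient
    {H : Type*} [NormedAddCommGroup H] [InnerProductSpace ℂ H] [CompleteSpace H]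
    (U : H ≃ₗᵢ[ℂ] H) (e : H)
    (he : Summable fun n : ℕ => ‖(inner ℂ e ((U ^ (n + 1)) e) : ℂ)‖ ^ 2)
    (ψ : H) (hψ : ψ ∈ Submodule.span ℂ (Set.range fun k : ℤ => (U ^ k) e)) :
    Summable fun n : ℕ => ‖(inner ℂ ψ ((U ^ (n + 1)) ψ) : ℂ)‖ ^ 2 := by
  set b : ℤ → ℝ := fun t => ‖(inner ℂ e ((U ^ t) e) : ℂ)‖ ^ 2 with hbdef
  -- symmetry of b
  have hsymm : ∀ t : ℤ, b (-t) = b t := by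
    intro t
    have h1 : (inner ℂ e ((U ^ (-t)) e) : ℂ) = inner ℂ ((U ^ t) e) e := by
      have := LinearIsometryEquiv.inner_map_map (U ^ t) e ((U ^ (-t)) e)
      rw [← this]
      congr 1
      have : (U ^ t) ((U ^ (-t)) e) = (U ^ t * U ^ (-t)) e := rfl
      rw [this, ← zpow_add, add_neg_cancel, zpow_zero]
      rfl
    simp only [hbdef, h1, ← inner_conj_symm e ((U ^ t) e), RCLike.norm_conj]
  -- summability over ℤ
  have hnat : Summable fun n : ℕ => b n := by
    rw [← summable_nat_add_iff 1]
    have heq : (fun n : ℕ => b ((n + 1 : ℕ) : ℤ)) = fun n : ℕ => ‖(inner ℂ e ((U ^ (n + 1)) e) : ℂ)‖ ^ 2 := by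
      funext n
      simp only [hbdef, zpow_natCast]
    rw [heq]
    exact he
  have hb : Summable b := by
    refine Summable.of_nat_of_neg hnat ?_
    simpa only [hsymm] using hnat
  -- the base case
  have key : ∀ j k : ℤ, Summable fun n : ℕ =>
      ‖(inner ℂ ((U ^ j) e) ((U ^ (n + 1)) ((U ^ k) e)) : ℂ)‖ ^ 2 := by
    intro j k
    have hinj : Function.Injective fun n : ℕ => (n : ℤ) + (1 + k - j) := by
      intro a c h
      simpa using h
    have : Summable (b ∘ fun n : ℕ => (n : ℤ) + (1 + k - j)) := hb.comp_injective hinj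
    convert this using 2 with n
    have h1 : (U ^ (n + 1)) ((U ^ k) e) = (U ^ ((n : ℤ) + 1 + k)) e := by
      have : (U ^ (n + 1)) ((U ^ k) e) = (U ^ ((n + 1 : ℕ) : ℤ) * U ^ k) e := by
        rw [zpow_natCast]; rfl
      rw [this, ← zpow_add]
      push_cast
      ring_nf
    rw [h1]
    have h2 : ((U ^ ((n : ℤ) + 1 + k)) e) = (U ^ j) ((U ^ ((n : ℤ) + (1 + k - j))) e) := by
      have : (U ^ j) ((U ^ ((n : ℤ) + (1 + k - j))) e)
          = (U ^ j * U ^ ((n : ℤ) + (1 + k - j))) e := rfl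
      rw [this, ← zpow_add]
      ring_nf
    rw [h2, LinearIsometryEquiv.inner_map_map]
    rfl
  -- closure under linear combinations, in each argument
  have main : ∀ φ ∈ Submodule.span ℂ (Set.range fun k : ℤ => (U ^ k) e),
      ∀ χ ∈ Submodule.span ℂ (Set.range fun k : ℤ => (U ^ k) e),
      Summable fun n : ℕ => ‖(inner ℂ φ ((U ^ (n + 1)) χ) : ℂ)‖ ^ 2 := by
    intro φ hφ
    induction hφ using Submodule.span_induction with
    | mem x hx =>
      obtain ⟨j, rfl⟩ := hx
      intro χ hχ
      induction hχ using Submodule.span_induction with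
      | mem y hy =>
        obtain ⟨k, rfl⟩ := hy
        exact key j k
      | zero => simpa using summable_zero
      | add y z _ _ hy hz =>
        have heq : (fun n : ℕ => ‖(inner ℂ ((U ^ j) e) ((U ^ (n + 1)) (y + z)) : ℂ)‖ ^ 2)
            = fun n => ‖(inner ℂ ((U ^ j) e) ((U ^ (n + 1)) y) : ℂ)
              + (inner ℂ ((U ^ j) e) ((U ^ (n + 1)) z) : ℂ)‖ ^ 2 := by
          funext n; rw [map_add, inner_add_right]
        rw [heq]
        exact l2_add_aux _ _ hy hz
      | smul c y _ hy =>
        have : (fun n : ℕ => ‖(inner ℂ ((U ^ j) e) ((U ^ (n + 1)) (c • y)) : ℂ)‖ ^ 2)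
            = fun n => ‖c‖ ^ 2 * ‖(inner ℂ ((U ^ j) e) ((U ^ (n + 1)) y) : ℂ)‖ ^ 2 := by
          funext n
          rw [map_smul, inner_smul_right, norm_mul, mul_pow]
        rw [this]
        exact hy.mul_left _
    | zero => intro χ hχ; simpa using summable_zero
    | add y z _ _ hy hz =>
      intro χ hχ
      have heq : (fun n : ℕ => ‖(inner ℂ (y + z) ((U ^ (n + 1)) χ) : ℂ)‖ ^ 2)
          = fun n => ‖(inner ℂ y ((U ^ (n + 1)) χ) : ℂ) + (inner ℂ z ((U ^ (n + 1)) χ) : ℂ)‖ ^ 2 := by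
        funext n; rw [inner_add_left]
      rw [heq]
      exact l2_add_aux _ _ (hy χ hχ) (hz χ hχ)
    | smul c y _ hy =>
      intro χ hχ
      have : (fun n : ℕ => ‖(inner ℂ (c • y) ((U ^ (n + 1)) χ) : ℂ)‖ ^ 2)
          = fun n => ‖(starRingEnd ℂ) c‖ ^ 2 * ‖(inner ℂ y ((U ^ (n + 1)) χ) : ℂ)‖ ^ 2 := by
        funext n
        rw [inner_smul_left, norm_mul, mul_pow]
      rw [this]
      exact (hy χ hχ).mul_left _
  exact main ψ hψ ψ hψ
end

section
/- Let a ∈ ℂ with |a| < 1, let ρ = √(1 − |a|²), let z ∈ ℂ with z ≠ 0, and set y = (z + z^{−1})/(2ρ). Let T be the 2×2 complex matrix T = ρ^{−1} [[z^{−1}, −a], [−conj(a), z]]. Then for every n ≥ 0, T^n applied to the column vector (1, 1)ᵀ equals the column vector ( U_n(y) − ρ^{−1}(z + a) U_{n−1}(y), U_n(y) − ρ^{−1}(z^{−1} + conj(a)) U_{n−1}(y) )ᵀ, where U_n denotes the Chebyshev polynomials of the second kind with U_{−1} = 0 and U_0 = 1. -/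
/-- Evaluation at `y` of the Chebyshev polynomial of the second kind `U_k`, `k ∈ ℤ`
(with `U_{-1} = 0`, `U_0 = 1`). -/
noncomputable def chebUeval (y : ℂ) (k : ℤ) : ℂ := (Polynomial.Chebyshev.U ℂ k).eval y

/-- For `|a| < 1`, `ρ = √(1-|a|²)`, `z ≠ 0` and `y = (z + z⁻¹)/(2ρ)`, the `n`-th power of the
transfer matrix `T = ρ⁻¹ [[z⁻¹, -a], [-conj a, z]]` applied to `(1,1)ᵀ` equals
`(U_n(y) - ρ⁻¹(z+a)U_{n-1}(y), U_n(y) - ρ⁻¹(z⁻¹+conj a)U_{n-1}(y))ᵀ`. -/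
theorem transfer_matrix_power_eq_chebyshev
    (a : ℂ) (ha : ‖a‖ < 1) (z : ℂ) (hz : z ≠ 0) (n : ℕ) :
    ((((Real.sqrt (1 - ‖a‖ ^ 2) : ℂ))⁻¹ •
        !![z⁻¹, -a; -(starRingEnd ℂ) a, z]) ^ n).mulVec ![1, 1]
      = ![chebUeval ((z + z⁻¹) / (2 * (Real.sqrt (1 - ‖a‖ ^ 2) : ℂ))) n
            - ((Real.sqrt (1 - ‖a‖ ^ 2) : ℂ))⁻¹ * (z + a) *
              chebUeval ((z + z⁻¹) / (2 * (Real.sqrt (1 - ‖a‖ ^ 2) : ℂ))) ((n : ℤ) - 1),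
          chebUeval ((z + z⁻¹) / (2 * (Real.sqrt (1 - ‖a‖ ^ 2) : ℂ))) n
            - ((Real.sqrt (1 - ‖a‖ ^ 2) : ℂ))⁻¹ * (z⁻¹ + (starRingEnd ℂ) a) *
              chebUeval ((z + z⁻¹) / (2 * (Real.sqrt (1 - ‖a‖ ^ 2) : ℂ))) ((n : ℤ) - 1)] := by
  set ρ : ℂ := ((Real.sqrt (1 - ‖a‖ ^ 2) : ℝ) : ℂ) with hρdef
  set y : ℂ := (z + z⁻¹) / (2 * ρ) with hydef
  have h1 : (0:ℝ) < 1 - ‖a‖ ^ 2 := by nlinarith [norm_nonneg a]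
  have hρ : ρ ≠ 0 := by
    simp only [hρdef, ne_eq, Complex.ofReal_eq_zero]
    positivity
  have hρ2 : ρ * ρ = 1 - a * (starRingEnd ℂ) a := by
    rw [hρdef, ← Complex.ofReal_mul, Real.mul_self_sqrt h1.le]
    have : a * (starRingEnd ℂ) a = ((‖a‖ ^ 2 : ℝ) : ℂ) := by
      rw [Complex.mul_conj]; norm_cast
      simp [Complex.normSq_eq_norm_sq]
    rw [this]; push_cast; ring
  have hρρ : ρ * ρ⁻¹ = 1 := mul_inv_cancel₀ hρ
  have hzz : z * z⁻¹ = 1 := mul_inv_cancel₀ hz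
  have hy : 2 * y * ρ = z + z⁻¹ := by
    rw [hydef]; field_simp
  have hrec : ∀ k : ℤ, chebUeval y (k + 2) = 2 * y * chebUeval y (k + 1) - chebUeval y k := by
    intro k
    simp [chebUeval, Polynomial.Chebyshev.U_add_two]
  induction n with
  | zero =>
      simp [chebUeval, Polynomial.Chebyshev.U_neg_one]
  | succ n ih =>
      rw [pow_succ', ← Matrix.mulVec_mulVec, ih]
      have hU : chebUeval y ((n : ℤ) + 1) = 2 * y * chebUeval y n - chebUeval y ((n:ℤ) - 1) := by
        have := hrec ((n:ℤ) - 1)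
        rw [show (n:ℤ) - 1 + 2 = (n:ℤ) + 1 by ring, show (n:ℤ) - 1 + 1 = (n:ℤ) by ring] at this
        exact this
      funext i
      set U : ℂ := chebUeval y n with hUdef
      set V : ℂ := chebUeval y ((n:ℤ) - 1) with hVdef
      fin_cases i <;>
        simp only [Matrix.mulVec, dotProduct, Fin.sum_univ_two, Matrix.smul_apply,
          Matrix.cons_val', Matrix.cons_val_zero, Matrix.cons_val_one, Matrix.head_cons,
          Matrix.head_fin_const, Matrix.empty_val', Matrix.cons_val_fin_one, Matrix.of_apply,
          smul_eq_mul] <;>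
      · push_cast
        rw [hU, show ((n:ℤ) + 1 - 1) = (n:ℤ) by ring]
        field_simp
        linear_combination (-(ρ*U*z*z⁻¹) - ρ*U*z^2) * hρρ + (-(ρ*U)) * hzz
          + (z*V) * hρ2
end

section
/- Let U be the Hadamard walk unitary on ℓ²(ℤ × {↑,↓}). Then for every k ∈ ℤ, the vectors ψ₁ = e_{k,↓} + e_{k+2,↓} and ψ₂ = e_{k+1,↑} + e_{k+3,↑} satisfy Σ_{n=1}^∞ |⟨ψ_i, U^n ψ_i⟩|² < ∞ for i = 1, 2; that is, the Hadamard quantum random walk on the integers possesses transient states, necessarily involving non-contiguous sites. -/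
/-- Basis vector `e_{i,s}` of `ℓ²(ℤ × {↑,↓})`, with `true = ↑` and `false = ↓`. -/
noncomputable def hadamardBasis (i : ℤ) (s : Bool) : lp (fun _ : ℤ × Bool => ℂ) 2 :=
  lp.single 2 (i, s) 1



namespace HadamardAux

/-- Central object: Fibonacci-type Laurent coefficients. -/
def phi : ℕ → ℤ → ℤ
  | 0, _ => 0
  | 1, a => if a = 0 then 1 else 0
  | n + 2, a => phi (n+1) (a-1) - phi (n+1) (a+1) + 2 * phi n a

lemma phi_zero (a : ℤ) : phi 0 a = 0 := rfl
lemma phi_one (a : ℤ) : phi 1 a = if a = 0 then 1 else 0 := rfl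
lemma phi_add_two (n : ℕ) (a : ℤ) :
    phi (n+2) a = phi (n+1) (a-1) - phi (n+1) (a+1) + 2 * phi n a := rfl

def sg (a : ℤ) : ℤ := if Even a then 1 else -1

lemma sg_add_one (a : ℤ) : sg (a+1) = - sg a := by
  simp only [sg, Int.even_add_one]
  by_cases h : Even a <;> simp [h]

lemma sg_sub_one (a : ℤ) : sg (a-1) = - sg a := by
  simp only [sg, Int.even_sub_one]
  by_cases h : Even a <;> simp [h]

theorem phi_neg : ∀ (n : ℕ) (a : ℤ), phi n (-a) = sg a * phi n a
  | 0, a => by simp [phi_zero]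
  | 1, a => by
    rcases eq_or_ne a 0 with rfl | h
    · simp [phi_one, sg]
    · simp [phi_one, sg, h, neg_eq_zero]
  | n + 2, a => by
    have h1 := phi_neg (n+1) (a+1)
    have h2 := phi_neg (n+1) (a-1)
    have h3 := phi_neg n a
    rw [phi_add_two, phi_add_two,
      show -a - 1 = -(a+1) by ring, show -a + 1 = -(a-1) by ring,
      h1, h2, h3, sg_add_one, sg_sub_one]
    ring

theorem Dlem : ∀ (n : ℕ) (a : ℤ),
    (a-2) * phi (n+1) (a-2) + 6*a* phi (n+1) a + (a+2) * phi (n+1) (a+2)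
      = (n : ℤ) * (phi (n+1) (a-2) - phi (n+1) (a+2))
        + (4*(n:ℤ)+4) * (phi n (a-1) + phi n (a+1))
  | 0, a => by
    simp only [show (0:ℕ)+1 = 1 from rfl, phi_one, phi_zero, Nat.cast_zero]
    split_ifs <;> ring_nf <;> omega
  | 1, a => by
    have e : ∀ b : ℤ, phi 2 b = phi 1 (b-1) - phi 1 (b+1) + 2 * phi 0 b := fun b => rfl
    simp only [show (1:ℕ)+1 = 2 from rfl, Nat.cast_one]
    rw [e (a-2), e a, e (a+2)]
    simp only [phi_one, phi_zero]
    split_ifs <;> ring_nf <;> omega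
  | n + 2, a => by
    have h1 := Dlem (n+1) (a-1)
    have h2 := Dlem (n+1) (a+1)
    have h3 := Dlem n a
    have rm := phi_add_two n (a-1)
    have rp := phi_add_two n (a+1)
    simp only [show n+1+1 = n+2 from rfl] at h1 h2
    have e0 : ∀ b : ℤ, phi (n+3) b
        = phi (n+2) (b-1) - phi (n+2) (b+1) + 2 * phi (n+1) b := fun b => phi_add_two (n+1) b
    rw [show n+2+1 = n+3 from rfl, e0 (a-2), e0 a, e0 (a+2)]
    simp only [show a-2-1 = a-3 from by ring, show a-2+1 = a-1 from by ring,
      show a+2-1 = a+1 from by ring, show a+2+1 = a+3 from by ring,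
      show a-1-2 = a-3 from by ring, show a-1+2 = a+1 from by ring,
      show a-1-1 = a-2 from by ring, show a-1+1 = a from by ring,
      show a+1-2 = a-1 from by ring, show a+1+2 = a+3 from by ring,
      show a+1-1 = a from by ring, show a+1+1 = a+2 from by ring] at h1 h2 rm rp ⊢
    push_cast at h1 h2 h3 ⊢
    linear_combination h1 - h2 + 2*h3 - (4*(n:ℤ)+4)*(rm + rp)

/-- The (integer multiple of the) overlap amplitude: `a_{n+1} = (√2)^{-(n+1)} * cZ n`. -/
def cZ (n : ℕ) : ℤ := 4 * (phi n 0 + phi n 2) - phi (n+1) 1 - phi (n+1) 3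

theorem starstar (n : ℕ) :
    ((n:ℤ)+3) * cZ n = 8 * (phi n 0 + phi n 2) + 4 * phi (n+1) 1 := by
  have D1 := Dlem n 1
  have hs : phi (n+1) (-1) = - phi (n+1) 1 := by
    have h := phi_neg (n+1) 1
    rw [h, show sg 1 = -1 from by simp [sg, Int.even_iff]]
    ring
  simp only [show (1:ℤ)-2 = -1 from by norm_num, show (1:ℤ)+2 = 3 from by norm_num,
    show (1:ℤ)-1 = 0 from by norm_num, show (1:ℤ)+1 = 2 from by norm_num,
    show 6*(1:ℤ) = 6 from by norm_num] at D1
  unfold cZ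
  linear_combination (-1 : ℤ) * D1 - ((n:ℤ)+1) * hs

end HadamardAux

namespace HadamardAux

noncomputable def rC : ℂ := ((Real.sqrt 2 : ℂ))⁻¹

lemma sqrt2_mul_self : (Real.sqrt 2 : ℂ) * (Real.sqrt 2 : ℂ) = 2 := by
  rw [← Complex.ofReal_mul, Real.mul_self_sqrt (by norm_num)]
  norm_num

lemma sqrt2_ne_zero : (Real.sqrt 2 : ℂ) ≠ 0 := by
  intro h
  have := sqrt2_mul_self
  rw [h] at this
  simp at this

lemma conj_rC : (starRingEnd ℂ) rC = rC := by
  rw [rC, map_inv₀, Complex.conj_ofReal]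

lemma norm_rC : ‖rC‖ = (Real.sqrt 2)⁻¹ := by
  rw [rC, norm_inv, Complex.norm_real, Real.norm_eq_abs,
    abs_of_nonneg (Real.sqrt_nonneg 2)]

lemma inner_basis (i j : ℤ) (s t : Bool) :
    (inner ℂ (hadamardBasis i s) (hadamardBasis j t) : ℂ)
      = if i = j ∧ s = t then 1 else 0 := by
  unfold hadamardBasis
  rw [lp.inner_single_left]
  by_cases h : ((i, s) : ℤ × Bool) = (j, t)
  · rw [h, lp.single_apply_self]
    have : i = j ∧ s = t := by simpa [Prod.ext_iff] using h
    simp [this]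
  · rw [lp.single_apply_ne _ _ _ h]
    have : ¬ (i = j ∧ s = t) := by simpa [Prod.ext_iff] using h
    simp [this]

lemma norm_basis (i : ℤ) (s : Bool) : ‖hadamardBasis i s‖ = 1 := by
  have := lp.norm_single (p := 2) (E := fun _ : ℤ × Bool => ℂ) (by norm_num) (i, s) (1:ℂ)
  simpa [hadamardBasis] using this

section Dyn

variable {U : lp (fun _ : ℤ × Bool => ℂ) 2 ≃ₗᵢ[ℂ] lp (fun _ : ℤ × Bool => ℂ) 2}
variable (hUup : ∀ i : ℤ, U (hadamardBasis i true) =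
      ((Real.sqrt 2 : ℂ))⁻¹ • (hadamardBasis (i + 1) true + hadamardBasis (i - 1) false))
variable (hUdown : ∀ i : ℤ, U (hadamardBasis i false) =
      ((Real.sqrt 2 : ℂ))⁻¹ • (hadamardBasis (i + 1) true - hadamardBasis (i - 1) false))

include hUup hUdown

omit hUup hUdown in
lemma rC_mul_rC_two : rC * (rC * 2) = 1 := by
  rw [rC]
  field_simp
  rw [sq]; exact sqrt2_mul_self.symm

lemma Usymm_up (j : ℤ) : U.symm (hadamardBasis j true)
    = rC • (hadamardBasis (j-1) true + hadamardBasis (j-1) false) := by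
  have h : U (rC • (hadamardBasis (j-1) true + hadamardBasis (j-1) false))
      = hadamardBasis j true := by
    rw [map_smul, map_add, hUup, hUdown, show j - 1 + 1 = j from by ring,
      show ((Real.sqrt 2:ℂ))⁻¹ = rC from rfl, ← smul_add, add_add_sub_cancel,
      ← two_smul ℂ, smul_smul, smul_smul,
      show rC * rC * 2 = 1 from by rw [mul_assoc]; exact rC_mul_rC_two, one_smul]
  rw [← h, LinearIsometryEquiv.symm_apply_apply]

lemma Usymm_down (j : ℤ) : U.symm (hadamardBasis j false)
    = rC • (hadamardBasis (j+1) true - hadamardBasis (j+1) false) := by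
  have h : U (rC • (hadamardBasis (j+1) true - hadamardBasis (j+1) false))
      = hadamardBasis j false := by
    rw [map_smul, map_sub, hUup, hUdown, show j + 1 - 1 = j from by ring,
      show ((Real.sqrt 2:ℂ))⁻¹ = rC from rfl, ← smul_sub, add_sub_sub_cancel,
      ← two_smul ℂ, smul_smul, smul_smul,
      show rC * rC * 2 = 1 from by rw [mul_assoc]; exact rC_mul_rC_two, one_smul]
  rw [← h, LinearIsometryEquiv.symm_apply_apply]

omit hUup hUdown in
lemma inner_U_step (v w : lp (fun _ : ℤ × Bool => ℂ) 2) :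
    (inner ℂ v (U w) : ℂ) = inner ℂ (U.symm v) w := by
  conv_lhs => rw [← U.apply_symm_apply v]
  exact U.inner_map_map (U.symm v) w

omit hUup hUdown in
lemma pow_apply_succ (n : ℕ) (x : lp (fun _ : ℤ × Bool => ℂ) 2) :
    (U ^ (n+2)) x = U ((U ^ (n+1)) x) := by
  rw [pow_succ']
  rfl

end Dyn

end HadamardAux

namespace HadamardAux
section Dyn2

variable {U : lp (fun _ : ℤ × Bool => ℂ) 2 ≃ₗᵢ[ℂ] lp (fun _ : ℤ × Bool => ℂ) 2}
variable (hUup : ∀ i : ℤ, U (hadamardBasis i true) =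
      ((Real.sqrt 2 : ℂ))⁻¹ • (hadamardBasis (i + 1) true + hadamardBasis (i - 1) false))
variable (hUdown : ∀ i : ℤ, U (hadamardBasis i false) =
      ((Real.sqrt 2 : ℂ))⁻¹ • (hadamardBasis (i + 1) true - hadamardBasis (i - 1) false))

include hUup hUdown

theorem dynD : ∀ (n : ℕ) (m i : ℤ),
    ((inner ℂ (hadamardBasis i true) ((U ^ (n+1)) (hadamardBasis m false)) : ℂ)
        = rC ^ (n+1) * ((phi (n+1) (i - m - 1) : ℤ) : ℂ))
    ∧ ((inner ℂ (hadamardBasis i false) ((U ^ (n+1)) (hadamardBasis m false)) : ℂ)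
        = rC ^ (n+1) * (((2 * phi n (i - m) - phi (n+1) (i - m + 1) : ℤ)) : ℂ))
  | 0, m, i => by
    simp only [zero_add, pow_one]
    rw [hUdown m]
    constructor
    · rw [inner_smul_right, inner_sub_right, inner_basis, inner_basis, phi_one]
      by_cases h : i = m + 1
      · have h' : i - m - 1 = 0 := by omega
        simp [h, h', rC]
      · have h' : ¬(i - m - 1 = 0) := by omega
        simp [h, h', rC]
    · rw [inner_smul_right, inner_sub_right, inner_basis, inner_basis, phi_one, phi_zero]
      by_cases h : i = m - 1
      · have h' : i - m + 1 = 0 := by omega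
        simp [h, h', rC]
      · have h' : ¬(i - m + 1 = 0) := by omega
        simp [h, h', rC]
  | (n+1), m, i => by
    have IH := dynD n m
    simp only [show n+1+1 = n+2 from rfl]
    constructor
    · rw [pow_apply_succ, inner_U_step, Usymm_up hUup hUdown i, inner_smul_left,
        inner_add_left, (IH (i-1)).1, (IH (i-1)).2, conj_rC]
      simp only [show i - 1 - m - 1 = i - m - 2 from by ring, show i - 1 - m = i - m - 1 from by ring,
        show i - 1 - m + 1 = i - m from by ring, show i - m - 1 + 1 = i - m from by ring]
      rw [phi_add_two n (i - m - 1)]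
      simp only [show i - m - 1 - 1 = i - m - 2 from by ring, show i - m - 1 + 1 = i - m from by ring]
      push_cast
      ring
    · rw [pow_apply_succ, inner_U_step, Usymm_down hUup hUdown i, inner_smul_left,
        inner_sub_left, (IH (i+1)).1, (IH (i+1)).2, conj_rC]
      simp only [show i + 1 - m - 1 = i - m from by ring, show i + 1 - m = i - m + 1 from by ring,
        show i + 1 - m + 1 = i - m + 2 from by ring, show i - m + 1 + 1 = i - m + 2 from by ring]
      rw [phi_add_two n (i - m + 1)]
      simp only [show i - m + 1 - 1 = i - m from by ring, show i - m + 1 + 1 = i - m + 2 from by ring]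
      push_cast
      ring

theorem dynU : ∀ (n : ℕ) (m i : ℤ),
    ((inner ℂ (hadamardBasis i true) ((U ^ (n+1)) (hadamardBasis m true)) : ℂ)
        = rC ^ (n+1) * (((phi (n+1) (i - m - 1) + 2 * phi n (i - m) : ℤ)) : ℂ))
    ∧ ((inner ℂ (hadamardBasis i false) ((U ^ (n+1)) (hadamardBasis m true)) : ℂ)
        = rC ^ (n+1) * ((phi (n+1) (i - m + 1) : ℤ) : ℂ))
  | 0, m, i => by
    simp only [zero_add, pow_one]
    rw [hUup m]
    constructor
    · rw [inner_smul_right, inner_add_right, inner_basis, inner_basis, phi_one, phi_zero]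
      by_cases h : i = m + 1
      · have h' : i - m - 1 = 0 := by omega
        simp [h, h', rC]
      · have h' : ¬(i - m - 1 = 0) := by omega
        simp [h, h', rC]
    · rw [inner_smul_right, inner_add_right, inner_basis, inner_basis, phi_one]
      by_cases h : i = m - 1
      · have h' : i - m + 1 = 0 := by omega
        simp [h, h', rC]
      · have h' : ¬(i - m + 1 = 0) := by omega
        simp [h, h', rC]
  | (n+1), m, i => by
    have IH := dynU n m
    simp only [show n+1+1 = n+2 from rfl]
    constructor
    · rw [pow_apply_succ, inner_U_step, Usymm_up hUup hUdown i, inner_smul_left,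
        inner_add_left, (IH (i-1)).1, (IH (i-1)).2, conj_rC]
      simp only [show i - 1 - m - 1 = i - m - 2 from by ring, show i - 1 - m = i - m - 1 from by ring,
        show i - 1 - m + 1 = i - m from by ring, show i - m - 1 + 1 = i - m from by ring]
      rw [phi_add_two n (i - m - 1)]
      simp only [show i - m - 1 - 1 = i - m - 2 from by ring, show i - m - 1 + 1 = i - m from by ring]
      push_cast
      ring
    · rw [pow_apply_succ, inner_U_step, Usymm_down hUup hUdown i, inner_smul_left,
        inner_sub_left, (IH (i+1)).1, (IH (i+1)).2, conj_rC]
      simp only [show i + 1 - m - 1 = i - m from by ring, show i + 1 - m = i - m + 1 from by ring,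
        show i + 1 - m + 1 = i - m + 2 from by ring, show i - m + 1 + 1 = i - m + 2 from by ring]
      rw [phi_add_two n (i - m + 1)]
      simp only [show i - m + 1 - 1 = i - m from by ring, show i - m + 1 + 1 = i - m + 2 from by ring]
      push_cast
      ring

end Dyn2
end HadamardAux

namespace HadamardAux
section Dyn3

variable {U : lp (fun _ : ℤ × Bool => ℂ) 2 ≃ₗᵢ[ℂ] lp (fun _ : ℤ × Bool => ℂ) 2}
variable (hUup : ∀ i : ℤ, U (hadamardBasis i true) =
      ((Real.sqrt 2 : ℂ))⁻¹ • (hadamardBasis (i + 1) true + hadamardBasis (i - 1) false))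
variable (hUdown : ∀ i : ℤ, U (hadamardBasis i false) =
      ((Real.sqrt 2 : ℂ))⁻¹ • (hadamardBasis (i + 1) true - hadamardBasis (i - 1) false))

include hUup hUdown

lemma phi_abs_le (n : ℕ) (b : ℤ) : |((phi n b : ℤ) : ℝ)| ≤ Real.sqrt 2 ^ n := by
  cases n with
  | zero => simp [phi_zero]
  | succ n =>
    have h := (dynD hUup hUdown n 0 (b+1)).1
    rw [show b + 1 - 0 - 1 = b from by ring] at h
    have hnorm : ‖(inner ℂ (hadamardBasis (b+1) true)
        ((U ^ (n+1)) (hadamardBasis 0 false)) : ℂ)‖ ≤ 1 := by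
      calc ‖(inner ℂ (hadamardBasis (b+1) true) ((U ^ (n+1)) (hadamardBasis 0 false)) : ℂ)‖
          ≤ ‖hadamardBasis (b+1) true‖ * ‖(U ^ (n+1)) (hadamardBasis 0 false)‖ :=
            norm_inner_le_norm _ _
        _ = 1 := by
            rw [LinearIsometryEquiv.norm_map, norm_basis, norm_basis, mul_one]
    rw [h, norm_mul, norm_pow, norm_rC, Complex.norm_intCast] at hnorm
    have hspos : (0:ℝ) < Real.sqrt 2 ^ (n+1) := pow_pos (Real.sqrt_pos.mpr (by norm_num)) _
    rw [inv_pow, inv_mul_le_iff₀ hspos, mul_one] at hnorm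
    exact hnorm

lemma val1 (n : ℕ) (k : ℤ) :
    (inner ℂ (hadamardBasis k false + hadamardBasis (k+2) false)
      ((U ^ (n+1)) (hadamardBasis k false + hadamardBasis (k+2) false)) : ℂ)
    = rC^(n+1) * ((cZ n : ℤ) : ℂ) := by
  have d00 := (dynD hUup hUdown n k k).2
  have d02 := (dynD hUup hUdown n (k+2) k).2
  have d20 := (dynD hUup hUdown n k (k+2)).2
  have d22 := (dynD hUup hUdown n (k+2) (k+2)).2
  simp only [show k - k = (0:ℤ) from by ring, show k - (k+2) = (-2:ℤ) from by ring,
    show k + 2 - k = (2:ℤ) from by ring, show k + 2 - (k+2) = (0:ℤ) from by ring,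
    show (0:ℤ) + 1 = 1 from by norm_num,
    show (-2:ℤ) + 1 = -1 from by norm_num, show (2:ℤ) + 1 = 3 from by norm_num] at d00 d02 d20 d22
  rw [map_add, inner_add_left, inner_add_right, inner_add_right, d00, d02, d20, d22,
    show phi (n+1) (-1) = - phi (n+1) 1 from by
      rw [show (-1 : ℤ) = -(1:ℤ) from by norm_num, phi_neg,
        show sg 1 = -1 from by simp [sg, Int.even_iff]]; ring,
    show phi n (-2) = phi n 2 from by
      rw [show (-2 : ℤ) = -(2:ℤ) from by norm_num, phi_neg,
        show sg 2 = 1 from by simp [sg, Int.even_iff]]; ring]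
  unfold cZ
  push_cast
  ring

lemma val2 (n : ℕ) (k : ℤ) :
    (inner ℂ (hadamardBasis k true + hadamardBasis (k+2) true)
      ((U ^ (n+1)) (hadamardBasis k true + hadamardBasis (k+2) true)) : ℂ)
    = rC^(n+1) * ((cZ n : ℤ) : ℂ) := by
  have d00 := (dynU hUup hUdown n k k).1
  have d02 := (dynU hUup hUdown n (k+2) k).1
  have d20 := (dynU hUup hUdown n k (k+2)).1
  have d22 := (dynU hUup hUdown n (k+2) (k+2)).1
  simp only [show k - k = (0:ℤ) from by ring, show k - (k+2) = (-2:ℤ) from by ring,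
    show k + 2 - k = (2:ℤ) from by ring, show k + 2 - (k+2) = (0:ℤ) from by ring,
    show (0:ℤ) - 1 = -1 from by norm_num,
    show (-2:ℤ) - 1 = -3 from by norm_num, show (2:ℤ) - 1 = 1 from by norm_num] at d00 d02 d20 d22
  rw [map_add, inner_add_left, inner_add_right, inner_add_right, d00, d02, d20, d22,
    show phi (n+1) (-1) = - phi (n+1) 1 from by
      rw [show (-1 : ℤ) = -(1:ℤ) from by norm_num, phi_neg,
        show sg 1 = -1 from by simp [sg, Int.even_iff]]; ring,
    show phi (n+1) (-3) = - phi (n+1) 3 from by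
      rw [show (-3 : ℤ) = -(3:ℤ) from by norm_num, phi_neg,
        show sg 3 = -1 from by simp [sg, Int.even_iff]]; ring,
    show phi n (-2) = phi n 2 from by
      rw [show (-2 : ℤ) = -(2:ℤ) from by norm_num, phi_neg,
        show sg 2 = 1 from by simp [sg, Int.even_iff]]; ring]
  unfold cZ
  push_cast
  ring

lemma cZ_bound (n : ℕ) :
    |((cZ n : ℤ) : ℝ)| * ((n:ℝ)+3) ≤ 16 * Real.sqrt 2 ^ (n+1) := by
  have hs := congrArg (fun z : ℤ => (z : ℝ)) (starstar n)
  push_cast at hs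
  have b0 := abs_le.mp (phi_abs_le hUup hUdown n 0)
  have b2 := abs_le.mp (phi_abs_le hUup hUdown n 2)
  have b1 := abs_le.mp (phi_abs_le hUup hUdown (n+1) 1)
  have h43 : (4:ℝ)/3 ≤ Real.sqrt 2 := by
    by_contra hcon
    push_neg at hcon
    have hnn := Real.sqrt_nonneg 2
    have hsq := Real.sq_sqrt (show (0:ℝ) ≤ 2 by norm_num)
    nlinarith
  have hsn : (0:ℝ) ≤ Real.sqrt 2 ^ n := pow_nonneg (Real.sqrt_nonneg 2) n
  have key : |((cZ n : ℤ):ℝ)| * ((n:ℝ)+3) = |((cZ n : ℤ):ℝ) * ((n:ℝ)+3)| := by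
    rw [abs_mul, abs_of_nonneg (by positivity : (0:ℝ) ≤ (n:ℝ)+3)]
  rw [key, show ((cZ n : ℤ):ℝ) * ((n:ℝ)+3)
      = 8*((phi n 0 : ℤ):ℝ) + 8*((phi n 2 : ℤ):ℝ) + 4*((phi (n+1) 1 : ℤ):ℝ) from by linarith]
  rw [pow_succ] at b1 ⊢
  have := abs_le.mpr (show -(16 * (Real.sqrt 2 ^ n * Real.sqrt 2))
      ≤ 8*((phi n 0 : ℤ):ℝ) + 8*((phi n 2 : ℤ):ℝ) + 4*((phi (n+1) 1 : ℤ):ℝ)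
      ∧ 8*((phi n 0 : ℤ):ℝ) + 8*((phi n 2 : ℤ):ℝ) + 4*((phi (n+1) 1 : ℤ):ℝ)
      ≤ 16 * (Real.sqrt 2 ^ n * Real.sqrt 2) from by
    constructor <;>
      nlinarith [mul_nonneg hsn (show (0:ℝ) ≤ 12 * Real.sqrt 2 - 16 from by linarith)])
  exact this

set_option maxHeartbeats 1000000 in
lemma norm_val_le (n : ℕ) :
    (Real.sqrt 2)⁻¹ ^ (n+1) * |((cZ n : ℤ):ℝ)| ≤ 16 / ((n:ℝ)+1) := by
  have hspos : (0:ℝ) < Real.sqrt 2 ^ (n+1) := pow_pos (Real.sqrt_pos.mpr (by norm_num)) _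
  rw [inv_pow, inv_mul_eq_div, div_le_div_iff₀ hspos (by positivity : (0:ℝ) < (n:ℝ)+1)]
  calc |((cZ n : ℤ):ℝ)| * ((n:ℝ)+1) ≤ |((cZ n : ℤ):ℝ)| * ((n:ℝ)+3) := by
        nlinarith [abs_nonneg ((cZ n : ℤ):ℝ)]
    _ ≤ 16 * Real.sqrt 2 ^ (n+1) := cZ_bound hUup hUdown n

end Dyn3

lemma majorant_summable : Summable (fun n : ℕ => 256/((n:ℝ)+1)^2) := by
  have h : Summable (fun n : ℕ => 1/((n:ℝ))^2) :=
    Real.summable_one_div_nat_pow.mpr one_lt_two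
  have h2 : Summable (fun n : ℕ => 1/(((n+1 : ℕ)):ℝ)^2) :=
    (summable_nat_add_iff (f := fun n : ℕ => 1/((n:ℝ))^2) 1).mpr h
  exact (h2.mul_left 256).congr (fun n => by push_cast; ring)

end HadamardAux

/-- The Hadamard walk on the integers possesses transient states involving non-contiguous
sites: for every `k`, the vectors `ψ₁ = e_{k,↓} + e_{k+2,↓}` and `ψ₂ = e_{k+1,↑} + e_{k+3,↑}`
satisfy `Σ_{n≥1} |⟨ψᵢ, U^n ψᵢ⟩|² < ∞`. -/
theorem hadamard_walk_transient_states
    (U : lp (fun _ : ℤ × Bool => ℂ) 2 ≃ₗᵢ[ℂ] lp (fun _ : ℤ × Bool => ℂ) 2)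
    (hUup : ∀ i : ℤ, U (hadamardBasis i true) =
      ((Real.sqrt 2 : ℂ))⁻¹ • (hadamardBasis (i + 1) true + hadamardBasis (i - 1) false))
    (hUdown : ∀ i : ℤ, U (hadamardBasis i false) =
      ((Real.sqrt 2 : ℂ))⁻¹ • (hadamardBasis (i + 1) true - hadamardBasis (i - 1) false))
    (k : ℤ) :
    Summable (fun n : ℕ =>
      ‖(inner ℂ (hadamardBasis k false + hadamardBasis (k + 2) false)
          ((U ^ (n + 1)) (hadamardBasis k false + hadamardBasis (k + 2) false)) : ℂ)‖ ^ 2) ∧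
    Summable (fun n : ℕ =>
      ‖(inner ℂ (hadamardBasis (k + 1) true + hadamardBasis (k + 3) true)
          ((U ^ (n + 1)) (hadamardBasis (k + 1) true + hadamardBasis (k + 3) true)) : ℂ)‖ ^ 2) := by
  constructor
  · refine Summable.of_nonneg_of_le (fun n => by positivity) (fun n => ?_)
      HadamardAux.majorant_summable
    have hv := HadamardAux.val1 hUup hUdown n k
    rw [hv, norm_mul, norm_pow, HadamardAux.norm_rC, Complex.norm_intCast]
    have hb := HadamardAux.norm_val_le hUup hUdown n
    have h1 : (0:ℝ) ≤ (Real.sqrt 2)⁻¹ ^ (n+1) * |((HadamardAux.cZ n : ℤ):ℝ)| := by positivity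
    calc ((Real.sqrt 2)⁻¹ ^ (n+1) * |((HadamardAux.cZ n : ℤ):ℝ)|)^2
        ≤ (16/((n:ℝ)+1))^2 := pow_le_pow_left₀ h1 hb 2
      _ = 256/((n:ℝ)+1)^2 := by rw [div_pow]; norm_num
  · rw [show (k+3 : ℤ) = (k+1)+2 from by ring]
    refine Summable.of_nonneg_of_le (fun n => by positivity) (fun n => ?_)
      HadamardAux.majorant_summable
    have hv := HadamardAux.val2 hUup hUdown n (k+1)
    rw [hv, norm_mul, norm_pow, HadamardAux.norm_rC, Complex.norm_intCast]
    have hb := HadamardAux.norm_val_le hUup hUdown n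
    have h1 : (0:ℝ) ≤ (Real.sqrt 2)⁻¹ ^ (n+1) * |((HadamardAux.cZ n : ℤ):ℝ)| := by positivity
    calc ((Real.sqrt 2)⁻¹ ^ (n+1) * |((HadamardAux.cZ n : ℤ):ℝ)|)^2
        ≤ (16/((n:ℝ)+1))^2 := pow_le_pow_left₀ h1 hb 2
      _ = 256/((n:ℝ)+1)^2 := by rw [div_pow]; norm_num
end
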